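/- arXiv:1607.01903 — 4 statements merged into one kernel-verified Lean document; each statement's English description precedes it below -/
import Mathlib

section
/- Let G be a multigraph, k a positive integer, and let A, B be nonempty subsets of two distinct equivalence classes of the relation ∼ₖ. Then there is a set X of at most k−1 edges of G such that in G−X there is no path from any vertex of A to any vertex of B. -/
/-- A multigraph: an edge type `E` together with an assignment of an
unordered pair of (not necessarily distinct) endvertices to every edge.
Loops and parallel edges are allowed. -/
structure Multigraph (V E : Type) where
  ends : E → Sym2 V

namespace Multigraph

variable {V E : Type}

/-- Walks in a multigraph, recording the edges traversed. -/
inductive Walk (G : Multigraph V E) : V → V → Type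
  | nil (v : V) : Walk G v v
  | cons {u v w : V} (e : E) (h : G.ends e = s(u, v)) (p : Walk G v w) : Walk G u w

namespace Walk

variable {G : Multigraph V E}

/-- The list of vertices visited by a walk. -/
def support : {u v : V} → G.Walk u v → List V
  | u, _, .nil _ => [u]
  | u, _, .cons _ _ p => u :: support p

/-- The list of edges traversed by a walk. -/
def edges : {u v : V} → G.Walk u v → List E
  | _, _, .nil _ => []
  | _, _, .cons e _ p => e :: edges p

/-- The length (number of edges) of a walk. -/
def length : {u v : V} → G.Walk u v → ℕ
  | _, _, .nil _ => 0
  | _, _, .cons _ _ p => length p + 1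

/-- A walk is a path if it repeats no vertex. -/
def IsPath {u v : V} (p : G.Walk u v) : Prop := p.support.Nodup

/-- A closed walk is a cycle if it is nonempty, repeats no edge and repeats no
vertex except the base vertex.  Cycles of length `1` (loops) and of
length `2` (pairs of parallel edges) are allowed. -/
def IsCycle {u : V} (p : G.Walk u u) : Prop :=
  p.edges ≠ [] ∧ p.edges.Nodup ∧ p.support.tail.Nodup

end Walk

open scoped Classical in
/-- The degree of a vertex in a multigraph: loops count twice. -/
noncomputable def degree (G : Multigraph V E) [Fintype E] (v : V) : ℕ :=
  ∑ e : E, (if G.ends e = s(v, v) then 2 else if v ∈ G.ends e then 1 else 0)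

end Multigraph

namespace Multigraph

variable {V E : Type}

/-- There exist `k` pairwise edge-disjoint `u`–`v`-paths in `G`. -/
def EdgeDisjointPaths (G : Multigraph V E) (k : ℕ) (u v : V) : Prop :=
  ∃ P : Fin k → G.Walk u v,
    (∀ i, (P i).IsPath) ∧
    ∀ i j, i ≠ j → ∀ e ∈ (P i).edges, e ∉ (P j).edges

/-- The relation `u ∼ₖ v`: either `u = v` or there are `k` pairwise
edge-disjoint `u`–`v`-paths in `G`. -/
def SimK (G : Multigraph V E) (k : ℕ) (u v : V) : Prop :=
  u = v ∨ G.EdgeDisjointPaths k u v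

end Multigraph


section GW
variable {V E : Type}

/-- Generic walks over an arbitrary arc system. -/
inductive GW (Arc : V → V → Type) : V → V → Type
  | nil (v : V) : GW Arc v v
  | cons {u v w : V} (a : Arc u v) (p : GW Arc v w) : GW Arc u w

namespace GW

variable {Arc : V → V → Type}

def support : {u v : V} → GW Arc u v → List V
  | u, _, .nil _ => [u]
  | u, _, .cons _ p => u :: support p

def edges (toE : ∀ {x y : V}, Arc x y → E) : {u v : V} → GW Arc u v → List E
  | _, _, .nil _ => []
  | _, _, .cons a p => toE a :: edges toE p

def append : {u v w : V} → GW Arc u v → GW Arc v w → GW Arc u w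
  | _, _, _, .nil _, q => q
  | _, _, _, .cons a p, q => .cons a (append p q)

lemma start_mem_support : ∀ {u v : V} (p : GW Arc u v), u ∈ p.support
  | _, _, .nil _ => List.mem_singleton.2 rfl
  | _, _, .cons _ _ => List.mem_cons_self

lemma end_mem_support : ∀ {u v : V} (p : GW Arc u v), v ∈ p.support
  | _, _, .nil _ => List.mem_singleton.2 rfl
  | _, _, .cons _ p => List.mem_cons_of_mem _ (end_mem_support p)

lemma edges_append (toE : ∀ {x y : V}, Arc x y → E) :
    ∀ {u v w : V} (p : GW Arc u v) (q : GW Arc v w),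
      (p.append q).edges toE = p.edges toE ++ q.edges toE
  | _, _, _, .nil _, q => rfl
  | _, _, _, .cons a p, q => by
      simp [append, edges, edges_append toE p q]

/-- Endpoints of any arc on a walk lie on the walk's support. -/
lemma mem_support_of_edge (toE : ∀ {x y : V}, Arc x y → E)
    {u v : V} (p : GW Arc u v) : ∀ e ∈ p.edges toE,
      ∃ x : V, ∃ y : V, ∃ a : Arc x y, toE a = e ∧ x ∈ p.support ∧ y ∈ p.support := by
  induction p with
  | nil => simp [edges]
  | cons a p ih =>
    intro e he
    rcases List.mem_cons.1 he with he | he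
    · exact ⟨_, _, a, he.symm, List.mem_cons_self,
        List.mem_cons_of_mem _ p.start_mem_support⟩
    · obtain ⟨x, y, a', h1, h2, h3⟩ := ih e he
      exact ⟨x, y, a', h1, List.mem_cons_of_mem _ h2, List.mem_cons_of_mem _ h3⟩

open Classical in
/-- Drop the part of the walk before the first occurrence of `x`. -/
noncomputable def dropUntil [DecidableEq V] :
    ∀ {u v : V} (p : GW Arc u v) (x : V), x ∈ p.support → GW Arc x v
  | u, _, .nil _, x, h => (List.mem_singleton.1 h) ▸ .nil x
  | u, w, .cons a p, x, h =>
      if hx : x = u then hx ▸ .cons a p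
      else dropUntil p x (by
        rcases List.mem_cons.1 h with h | h
        · exact absurd h hx
        · exact h)

lemma support_dropUntil_subset [DecidableEq V] :
    ∀ {u v : V} (p : GW Arc u v) (x : V) (h : x ∈ p.support),
      ∀ y ∈ (p.dropUntil x h).support, y ∈ p.support
  | u, _, .nil _, x, h => by
      have hx := List.mem_singleton.1 h; subst hx; intro y hy; exact hy
  | u, w, .cons a p, x, h => by
      by_cases hx : x = u
      · subst hx; intro y hy; simpa [dropUntil] using hy
      · intro y hy
        rw [dropUntil, dif_neg hx] at hy
        exact List.mem_cons_of_mem _ (support_dropUntil_subset p x _ y hy)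

lemma edges_dropUntil_subset [DecidableEq V] (toE : ∀ {x y : V}, Arc x y → E) :
    ∀ {u v : V} (p : GW Arc u v) (x : V) (h : x ∈ p.support),
      ∀ e ∈ (p.dropUntil x h).edges toE, e ∈ p.edges toE
  | u, _, .nil _, x, h => by
      have hx := List.mem_singleton.1 h; subst hx; intro e he; exact he
  | u, w, .cons a p, x, h => by
      by_cases hx : x = u
      · subst hx; intro e he; simpa [dropUntil] using he
      · intro e he
        rw [dropUntil, dif_neg hx] at he
        exact List.mem_cons_of_mem _ (edges_dropUntil_subset toE p x _ e he)

lemma dropUntil_nodup [DecidableEq V] :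
    ∀ {u v : V} (p : GW Arc u v) (x : V) (h : x ∈ p.support),
      p.support.Nodup → (p.dropUntil x h).support.Nodup
  | u, _, .nil _, x, h, hn => by
      have hx := List.mem_singleton.1 h; subst hx; exact hn
  | u, w, .cons a p, x, h, hn => by
      by_cases hx : x = u
      · subst hx; rw [dropUntil, dif_pos rfl]; exact hn
      · rw [dropUntil, dif_neg hx]
        exact dropUntil_nodup p x _ (List.nodup_cons.1 hn).2

open Classical in
noncomputable def bypass [DecidableEq V] : ∀ {u v : V}, GW Arc u v → GW Arc u v
  | _, _, .nil v => .nil v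
  | u, w, .cons a p =>
      let q := bypass p
      if h : u ∈ q.support then q.dropUntil u h else .cons a q

lemma support_bypass_subset [DecidableEq V] :
    ∀ {u v : V} (p : GW Arc u v), ∀ y ∈ p.bypass.support, y ∈ p.support
  | _, _, .nil v => by intro y hy; simpa [bypass] using hy
  | u, w, .cons a p => by
      intro y hy
      rw [bypass] at hy
      by_cases h : u ∈ (bypass p).support
      · rw [dif_pos h] at hy
        exact List.mem_cons_of_mem _
          (support_bypass_subset p y (support_dropUntil_subset _ u h y hy))
      · rw [dif_neg h] at hy
        rcases List.mem_cons.1 hy with hy | hy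
        · exact hy ▸ List.mem_cons_self
        · exact List.mem_cons_of_mem _ (support_bypass_subset p y hy)

lemma edges_bypass_subset [DecidableEq V] (toE : ∀ {x y : V}, Arc x y → E) :
    ∀ {u v : V} (p : GW Arc u v), ∀ e ∈ p.bypass.edges toE, e ∈ p.edges toE
  | _, _, .nil v => by intro e he; simpa [bypass] using he
  | u, w, .cons a p => by
      intro e he
      rw [bypass] at he
      by_cases h : u ∈ (bypass p).support
      · rw [dif_pos h] at he
        exact List.mem_cons_of_mem _
          (edges_bypass_subset toE p e (edges_dropUntil_subset toE _ u h e he))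
      · rw [dif_neg h] at he
        rcases List.mem_cons.1 he with he | he
        · exact he ▸ List.mem_cons_self
        · exact List.mem_cons_of_mem _ (edges_bypass_subset toE p e he)

lemma support_bypass_nodup [DecidableEq V] :
    ∀ {u v : V} (p : GW Arc u v), p.bypass.support.Nodup
  | _, _, .nil v => by simp [bypass, support]
  | u, w, .cons a p => by
      rw [bypass]
      by_cases h : u ∈ (bypass p).support
      · rw [dif_pos h]
        exact dropUntil_nodup _ u h (support_bypass_nodup p)
      · rw [dif_neg h]
        exact List.nodup_cons.2 ⟨h, support_bypass_nodup p⟩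

end GW
end GW

section P1b
variable {V E : Type} {Arc : V → V → Type}

namespace GW

lemma edges_nodup_of_support_nodup (toE : ∀ {x y : V}, Arc x y → E)
    (endsOf : E → Sym2 V)
    (hcompat : ∀ {x y : V} (a : Arc x y), endsOf (toE a) = s(x, y))
    {u v : V} (p : GW Arc u v) (h : p.support.Nodup) : (p.edges toE).Nodup := by
  induction p with
  | nil => simp [edges]
  | cons a p ih =>
    rw [support, List.nodup_cons] at h
    refine List.nodup_cons.2 ⟨?_, ih h.2⟩
    intro he
    obtain ⟨x, y, a', h1, h2, h3⟩ := mem_support_of_edge toE p _ he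
    have hxy : endsOf (toE a') = s(x, y) := hcompat a'
    rw [h1, hcompat a] at hxy
    have hu : _ ∈ s(x, y) := hxy ▸ Sym2.mem_mk_left _ _
    rcases Sym2.mem_iff.1 hu with h' | h'
    · exact h.1 (h' ▸ h2)
    · exact h.1 (h' ▸ h3)

def reverse (sym : ∀ {x y : V}, Arc x y → Arc y x) :
    {u v : V} → GW Arc u v → GW Arc v u
  | _, _, .nil v => .nil v
  | _, _, .cons a p => (reverse sym p).append (.cons (sym a) (.nil _))

lemma edges_reverse (sym : ∀ {x y : V}, Arc x y → Arc y x)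
    (toE : ∀ {x y : V}, Arc x y → E)
    (hsym : ∀ {x y : V} (a : Arc x y), toE (sym a) = toE a) :
    ∀ {u v : V} (p : GW Arc u v), ∀ e ∈ (p.reverse sym).edges toE, e ∈ p.edges toE
  | _, _, .nil v => by simp [reverse]
  | _, _, .cons a p => by
    intro e he
    rw [reverse, edges_append] at he
    rcases List.mem_append.1 he with he | he
    · exact List.mem_cons_of_mem _ (edges_reverse sym toE hsym p e he)
    · simp only [edges, List.mem_cons, List.not_mem_nil, or_false] at he
      rw [hsym a] at he
      exact he ▸ List.mem_cons_self

end GW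

namespace Multigraph
variable {G : Multigraph V E}

abbrev GArc (G : Multigraph V E) (x y : V) : Type := {e : E // G.ends e = s(x, y)}

def Walk.toGW : {u v : V} → G.Walk u v → GW G.GArc u v
  | _, _, .nil v => .nil v
  | _, _, .cons e h p => .cons ⟨e, h⟩ p.toGW

def ofGW : {u v : V} → GW G.GArc u v → G.Walk u v
  | _, _, .nil v => .nil v
  | _, _, .cons a p => .cons a.1 a.2 (ofGW p)

lemma support_toGW : ∀ {u v : V} (p : G.Walk u v), p.toGW.support = p.support
  | _, _, .nil v => rfl
  | _, _, .cons e h p => by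
      simp [Walk.toGW, GW.support, Walk.support, support_toGW p]

lemma edges_toGW : ∀ {u v : V} (p : G.Walk u v),
    p.toGW.edges (fun a => a.1) = p.edges
  | _, _, .nil v => rfl
  | _, _, .cons e h p => by
      simp [Walk.toGW, GW.edges, Walk.edges, edges_toGW p]

lemma support_ofGW : ∀ {u v : V} (p : GW G.GArc u v), (ofGW p).support = p.support
  | _, _, .nil v => rfl
  | _, _, .cons a p => by
      simp [ofGW, GW.support, Walk.support, support_ofGW p]

lemma edges_ofGW : ∀ {u v : V} (p : GW G.GArc u v),
    (ofGW p).edges = p.edges (fun a => a.1)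
  | _, _, .nil v => rfl
  | _, _, .cons a p => by
      simp [ofGW, GW.edges, Walk.edges, edges_ofGW p]

/-- From any walk, a path with the same endpoints whose edges are among
the walk's edges. -/
lemma exists_path_of_walk {u v : V} (p : G.Walk u v) :
    ∃ q : G.Walk u v, q.IsPath ∧ ∀ e ∈ q.edges, e ∈ p.edges := by
  classical
  refine ⟨ofGW p.toGW.bypass, ?_, ?_⟩
  · rw [Walk.IsPath, support_ofGW]
    exact GW.support_bypass_nodup _
  · intro e he
    rw [edges_ofGW] at he
    rw [← edges_toGW p]
    exact GW.edges_bypass_subset _ _ e he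

/-- Walk reversal. -/
lemma exists_reverse_walk {u v : V} (p : G.Walk u v) :
    ∃ q : G.Walk v u, ∀ e ∈ q.edges, e ∈ p.edges := by
  classical
  refine ⟨ofGW (p.toGW.reverse (fun a => ⟨a.1, by rw [a.2, Sym2.eq_swap]⟩)), ?_⟩
  intro e he
  rw [edges_ofGW] at he
  rw [← edges_toGW p]
  exact GW.edges_reverse _ _ (fun a => rfl) p.toGW e he

end Multigraph
end P1b



section Flow
namespace Multigraph
variable {V E : Type} [Fintype V] [Fintype E]
open scoped Classical
open Finset

open Classical Finset in
/-- Net outflow of a partial orientation `f` at vertex `v`. -/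
noncomputable def excess (f : E → Option (V × V)) (v : V) : ℤ :=
  ∑ e : E, ((match f e with | some d => if d.1 = v then (1:ℤ) else 0 | none => 0)
          - (match f e with | some d => if d.2 = v then (1:ℤ) else 0 | none => 0))

/-- A partial orientation is valid if it orients edges along their ends. -/
def Valid (G : Multigraph V E) (f : E → Option (V × V)) : Prop :=
  ∀ e x y, f e = some (x, y) → G.ends e = s(x, y)

open Classical Finset in
lemma excess_update (f : E → Option (V × V)) (e₀ : E) (w : Option (V × V)) (v : V) :
    excess (Function.update f e₀ w) v = excess f v
      - ((match f e₀ with | some d => if d.1 = v then (1:ℤ) else 0 | none => 0)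
        - (match f e₀ with | some d => if d.2 = v then (1:ℤ) else 0 | none => 0))
      + ((match w with | some d => if d.1 = v then (1:ℤ) else 0 | none => 0)
        - (match w with | some d => if d.2 = v then (1:ℤ) else 0 | none => 0)) := by
  have key : ∀ g : E → Option (V × V), excess g v =
      ((match g e₀ with | some d => if d.1 = v then (1:ℤ) else 0 | none => 0)
      - (match g e₀ with | some d => if d.2 = v then (1:ℤ) else 0 | none => 0))
      + ∑ e ∈ univ.erase e₀,
        ((match g e with | some d => if d.1 = v then (1:ℤ) else 0 | none => 0)
        - (match g e with | some d => if d.2 = v then (1:ℤ) else 0 | none => 0)) :=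
    fun g => (Finset.add_sum_erase _ _ (mem_univ e₀)).symm
  rw [key (Function.update f e₀ w), key f]
  have hs : ∀ e ∈ univ.erase e₀,
      ((match Function.update f e₀ w e with | some d => if d.1 = v then (1:ℤ) else 0 | none => 0)
      - (match Function.update f e₀ w e with | some d => if d.2 = v then (1:ℤ) else 0 | none => 0))
      = ((match f e with | some d => if d.1 = v then (1:ℤ) else 0 | none => 0)
        - (match f e with | some d => if d.2 = v then (1:ℤ) else 0 | none => 0)) := by
    intro e he
    rw [Function.update_of_ne (Finset.mem_erase.1 he).1]
  rw [Finset.sum_congr rfl hs, Function.update_self]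
  ring

lemma excess_update_add {f : E → Option (V × V)} {e₀ : E} (h : f e₀ = none) (x y v : V) :
    excess (Function.update f e₀ (some (x, y))) v
      = excess f v + (if x = v then (1:ℤ) else 0) - (if y = v then (1:ℤ) else 0) := by
  rw [excess_update, h]; ring

lemma excess_update_remove {f : E → Option (V × V)} {e₀ : E} {x y : V} (h : f e₀ = some (x, y))
    (v : V) :
    excess (Function.update f e₀ none) v
      = excess f v - (if x = v then (1:ℤ) else 0) + (if y = v then (1:ℤ) else 0) := by
  rw [excess_update, h]; ring

open Classical Finset in
/-- Summing excesses over a set counts directed crossings. -/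
lemma sum_excess (f : E → Option (V × V)) (R : Finset V) :
    ∑ v ∈ R, excess f v =
      ∑ e : E, ((if (∃ x y, f e = some (x, y) ∧ x ∈ R ∧ y ∉ R) then (1:ℤ) else 0)
              - (if (∃ x y, f e = some (x, y) ∧ x ∉ R ∧ y ∈ R) then (1:ℤ) else 0)) := by
  unfold excess
  rw [Finset.sum_comm]
  refine Finset.sum_congr rfl fun e _ => ?_
  rcases he : f e with _ | ⟨x, y⟩
  · simp [he]
  · have h1 : (∃ x1 y1, some (x, y) = some (x1, y1) ∧ x1 ∈ R ∧ y1 ∉ R) ↔ (x ∈ R ∧ y ∉ R) := by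
      constructor
      · rintro ⟨x1, y1, h', hh⟩
        rw [Option.some.injEq, Prod.mk.injEq] at h'
        obtain ⟨rfl, rfl⟩ := h'
        exact hh
      · intro hh; exact ⟨x, y, rfl, hh⟩
    have h2 : (∃ x1 y1, some (x, y) = some (x1, y1) ∧ x1 ∉ R ∧ y1 ∈ R) ↔ (x ∉ R ∧ y ∈ R) := by
      constructor
      · rintro ⟨x1, y1, h', hh⟩
        rw [Option.some.injEq, Prod.mk.injEq] at h'
        obtain ⟨rfl, rfl⟩ := h'
        exact hh
      · intro hh; exact ⟨x, y, rfl, hh⟩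
    rw [if_congr h1 rfl rfl, if_congr h2 rfl rfl]
    by_cases hx : x ∈ R <;> by_cases hy : y ∈ R <;>
      simp [Finset.sum_sub_distrib, Finset.sum_ite_eq, hx, hy]

end Multigraph
end Flow


section Residual
namespace Multigraph
variable {V E : Type} [Fintype V] [Fintype E] {G : Multigraph V E}
open scoped Classical
open Finset

/-- Residual arcs with respect to a partial orientation `f`: an unused edge
may be traversed in either direction, a used edge only backwards. -/
def RArc (G : Multigraph V E) (f : E → Option (V × V)) (u v : V) : Type :=
  {e : E // (f e = none ∧ G.ends e = s(u, v)) ∨ f e = some (v, u)}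

lemma rarc_ends {f : E → Option (V × V)} (hf : G.Valid f) {u v : V} (a : G.RArc f u v) :
    G.ends a.1 = s(u, v) := by
  rcases a.2 with ⟨_, h⟩ | h
  · exact h
  · rw [hf a.1 v u h, Sym2.eq_swap]

lemma augment_aux {f : E → Option (V × V)} (hf : G.Valid f) {b : V} :
    ∀ {u : V} (w : GW (G.RArc f) u b), (w.edges (fun a => a.1)).Nodup →
    ∀ g : E → Option (V × V), G.Valid g → (∀ e ∈ w.edges (fun a => a.1), g e = f e) →
    ∃ g', G.Valid g' ∧ (∀ e, e ∉ w.edges (fun a => a.1) → g' e = g e) ∧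
      ∀ v, excess g' v = excess g v + (if u = v then 1 else 0) - (if b = v then 1 else 0)
  | _, .nil _ => by
      intro _ g hg _
      exact ⟨g, hg, fun _ _ => rfl, fun v => by ring⟩
  | u, @GW.cons _ _ _ x _ a w => by
      intro hnd g hg hagree
      have hnd' := (List.nodup_cons.1 hnd).2
      have henotin : a.1 ∉ w.edges (fun a => a.1) := (List.nodup_cons.1 hnd).1
      obtain ⟨g', hg', hoff, hex⟩ := augment_aux hf w hnd' g hg
        (fun e he => hagree e (List.mem_cons_of_mem _ he))
      have hge : g' a.1 = f a.1 := by
        rw [hoff a.1 henotin, hagree a.1 (List.mem_cons_self)]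
      rcases a.2 with ⟨hnone, hends⟩ | hsome
      · refine ⟨Function.update g' a.1 (some (u, x)), ?_, ?_, ?_⟩
        · intro e p q hpq
          by_cases he : e = a.1
          · subst he; rw [Function.update_self] at hpq
            rw [Option.some.injEq, Prod.mk.injEq] at hpq
            obtain ⟨rfl, rfl⟩ := hpq
            exact hends
          · rw [Function.update_of_ne he] at hpq; exact hg' e p q hpq
        · intro e he
          have hne : e ≠ a.1 := fun h => he (h ▸ List.mem_cons_self)
          rw [Function.update_of_ne hne, hoff e (fun h => he (List.mem_cons_of_mem _ h))]
        · intro v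
          rw [excess_update_add (hge.trans hnone) u x v, hex v]
          ring
      · refine ⟨Function.update g' a.1 none, ?_, ?_, ?_⟩
        · intro e p q hpq
          by_cases he : e = a.1
          · subst he; rw [Function.update_self] at hpq; cases hpq
          · rw [Function.update_of_ne he] at hpq; exact hg' e p q hpq
        · intro e he
          have hne : e ≠ a.1 := fun h => he (h ▸ List.mem_cons_self)
          rw [Function.update_of_ne hne, hoff e (fun h => he (List.mem_cons_of_mem _ h))]
        · intro v
          rw [excess_update_remove (hge.trans hsome) v, hex v]
          ring

lemma exists_augment {f : E → Option (V × V)} (hf : G.Valid f) {a b : V}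
    (w : GW (G.RArc f) a b) :
    ∃ f', G.Valid f' ∧
      ∀ v, excess f' v = excess f v + (if a = v then 1 else 0) - (if b = v then 1 else 0) := by
  have hnd : (w.bypass.edges (fun a => a.1)).Nodup :=
    GW.edges_nodup_of_support_nodup _ G.ends (fun a => rarc_ends hf a) w.bypass
      (GW.support_bypass_nodup w)
  obtain ⟨g', h1, _, h3⟩ := augment_aux hf w.bypass hnd f hf (fun _ _ => rfl)
  exact ⟨g', h1, h3⟩

lemma cut_or_augment {f : E → Option (V × V)} (hf : G.Valid f) {a b : V} (hab : a ≠ b)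
    (m : ℕ) (hval : excess f a = m) (hzero : ∀ v, v ≠ a → v ≠ b → excess f v = 0) :
    (∃ f', G.Valid f' ∧ excess f' a = (m + 1 : ℕ) ∧ ∀ v, v ≠ a → v ≠ b → excess f' v = 0)
    ∨ ∃ (X : Finset E) (R : Set V), X.card = m ∧ a ∈ R ∧ b ∉ R ∧
        (∀ u ∈ R, ∀ w, ∀ p : G.Walk u w, (∀ e ∈ p.edges, e ∉ X) → w ∈ R) := by
  by_cases hreach : Nonempty (GW (G.RArc f) a b)
  · left
    obtain ⟨f', h1, h2⟩ := exists_augment hf hreach.some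
    refine ⟨f', h1, ?_, ?_⟩
    · rw [h2 a, hval, if_pos rfl, if_neg (fun h => hab h.symm)]
      push_cast; ring
    · intro v hva hvb
      rw [h2 v, hzero v hva hvb, if_neg (fun h => hva h.symm), if_neg (fun h => hvb h.symm)]
      ring
  · right
    set R : Set V := {v | Nonempty (GW (G.RArc f) a v)} with hR
    set Rf : Finset V := univ.filter (fun v => v ∈ R) with hRf
    set X : Finset E := univ.filter (fun e => ∃ x y, f e = some (x, y) ∧ x ∈ R ∧ y ∉ R) with hX
    have haR : a ∈ R := ⟨GW.nil a⟩
    have hbR : b ∉ R := hreach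
    have hstep : ∀ u ∈ R, ∀ {x : V}, G.RArc f u x → x ∈ R := by
      intro u hu x a'
      exact ⟨(hu.some).append (GW.cons a' (GW.nil _))⟩
    have hnoin : ∀ e, ¬∃ x y, f e = some (x, y) ∧ x ∉ R ∧ y ∈ R := by
      rintro e ⟨x, y, hfe, hx, hy⟩
      exact hx (hstep y hy ⟨e, Or.inr hfe⟩)
    have hmemf : ∀ v, v ∈ Rf ↔ v ∈ R := fun v => by simp [hRf]
    have h1 : ∑ v ∈ Rf, excess f v = (m : ℤ) := by
      rw [Finset.sum_eq_single a]
      · exact hval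
      · intro v hv hva
        have hvR : v ∈ R := (Finset.mem_filter.1 hv).2
        exact hzero v hva (fun h => hbR (h ▸ hvR))
      · intro ha'
        exact absurd (Finset.mem_filter.2 ⟨mem_univ a, haR⟩) ha'
    have h2 : ∑ v ∈ Rf, excess f v =
        ∑ e : E, ((if (∃ x y, f e = some (x, y) ∧ x ∈ R ∧ y ∉ R) then (1:ℤ) else 0)
                - (if (∃ x y, f e = some (x, y) ∧ x ∉ R ∧ y ∈ R) then (1:ℤ) else 0)) := by
      rw [sum_excess f Rf]
      refine Finset.sum_congr rfl fun e _ => ?_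
      simp only [hmemf]
    have h3 : (X.card : ℤ) =
        ∑ e : E, (if (∃ x y, f e = some (x, y) ∧ x ∈ R ∧ y ∉ R) then (1:ℤ) else 0) := by
      rw [hX, Finset.card_filter]
      push_cast
      rfl
    have hcard : (X.card : ℤ) = (m : ℤ) := by
      rw [h3]
      rw [h1] at h2
      rw [h2]
      refine Finset.sum_congr rfl fun e _ => ?_
      rw [if_neg (hnoin e)]
      ring
    refine ⟨X, R, Nat.cast_injective hcard, haR, hbR, ?_⟩
    suffices h : ∀ u w (p : G.Walk u w), (∀ e ∈ p.edges, e ∉ X) → u ∈ R → w ∈ R by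
      intro u hu w p hp; exact h u w p hp hu
    intro u w p
    induction p with
    | nil => exact fun _ h => h
    | cons e he q ih =>
      intro havoid hu
      refine ih (fun e' he' => havoid e' (List.mem_cons_of_mem _ he')) ?_
      rcases hfe : f e with _ | ⟨x, y⟩
      · exact hstep _ hu ⟨e, Or.inl ⟨hfe, he⟩⟩
      · rcases Sym2.eq_iff.1 (he.symm.trans (hf e x y hfe)) with ⟨h1, h2⟩ | ⟨h1, h2⟩
        · by_cases hy : y ∈ R
          · exact h2 ▸ hy
          · exact absurd (Finset.mem_filter.2 ⟨mem_univ e, ⟨x, y, hfe, h1 ▸ hu, hy⟩⟩)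
              (havoid e (List.mem_cons_self))
        · exact h2 ▸ (hstep _ hu ⟨e, Or.inr (h1.symm ▸ hfe)⟩)

end Multigraph
end Residual


section Decompose
namespace Multigraph
variable {V E : Type} [Fintype V] [Fintype E] {G : Multigraph V E}
open scoped Classical
open Finset

lemma exists_out {f : E → Option (V × V)} {u : V} (h : 1 ≤ excess f u) :
    ∃ e x, f e = some (u, x) := by
  by_contra hno
  push_neg at hno
  have hle : excess f u ≤ 0 := by
    unfold excess
    apply Finset.sum_nonpos
    intro e _
    rcases hfe : f e with _ | ⟨x, y⟩
    · simp [hfe]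
    · have hxu : x ≠ u := fun h' => hno e y (by rw [hfe, h'])
      simp only [hfe]
      rw [if_neg hxu]
      have : (0:ℤ) ≤ (if y = u then (1:ℤ) else 0) := by positivity
      linarith
  linarith

lemma extract_walk :
    ∀ (n : ℕ) (f : E → Option (V × V)), (univ.filter (fun e => f e ≠ none)).card ≤ n →
    G.Valid f → ∀ (u b : V), (u = b ∨ 1 ≤ excess f u) →
    (∀ v, v ≠ u → v ≠ b → 0 ≤ excess f v) →
    ∃ (w : G.Walk u b) (f' : E → Option (V × V)), G.Valid f' ∧
      (∀ e, e ∉ w.edges → f' e = f e) ∧ (∀ e ∈ w.edges, f' e = none ∧ f e ≠ none) ∧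
      (∀ v, excess f' v = excess f v - (if u = v then 1 else 0) + (if b = v then 1 else 0)) := by
  intro n
  induction n with
  | zero =>
    intro f hcard hf u b hu hnn
    rcases hu with rfl | hu
    · exact ⟨Walk.nil u, f, hf, fun _ _ => rfl,
        fun e he => absurd he List.not_mem_nil, fun v => by ring⟩
    · obtain ⟨e, x, hfe⟩ := exists_out hu
      have : e ∈ univ.filter (fun e' => f e' ≠ none) :=
        mem_filter.2 ⟨mem_univ e, by rw [hfe]; simp⟩
      have := Finset.card_pos.2 ⟨e, this⟩
      omega
  | succ n ih =>
    intro f hcard hf u b hu hnn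
    rcases hu with rfl | hu
    · exact ⟨Walk.nil u, f, hf, fun _ _ => rfl,
        fun e he => absurd he List.not_mem_nil, fun v => by ring⟩
    · obtain ⟨e, x, hfe⟩ := exists_out hu
      have hends : G.ends e = s(u, x) := hf e u x hfe
      set g := Function.update f e none with hg
      have hgnone : g e = none := Function.update_self e none f
      have hgv : G.Valid g := by
        intro e' p q h'
        by_cases hee : e' = e
        · subst hee; rw [hgnone] at h'; cases h'
        · rw [hg, Function.update_of_ne hee] at h'; exact hf e' p q h'
      have hgcard : (univ.filter (fun e' => g e' ≠ none)).card ≤ n := by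
        have hsub : univ.filter (fun e' => g e' ≠ none)
            ⊆ (univ.filter (fun e' => f e' ≠ none)).erase e := by
          intro e' he'
          have h' : g e' ≠ none := (mem_filter.1 he').2
          have hne : e' ≠ e := fun h => h' (h ▸ hgnone)
          refine Finset.mem_erase.2 ⟨hne, mem_filter.2 ⟨mem_univ e', ?_⟩⟩
          rw [hg, Function.update_of_ne hne] at h'
          exact h'
        have h1 := Finset.card_le_card hsub
        have hecard : e ∈ univ.filter (fun e' => f e' ≠ none) :=
          mem_filter.2 ⟨mem_univ e, by rw [hfe]; simp⟩
        rw [Finset.card_erase_of_mem hecard] at h1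
        omega
      have hexg : ∀ v, excess g v
          = excess f v - (if u = v then 1 else 0) + (if x = v then 1 else 0) :=
        fun v => excess_update_remove hfe v
      have hu' : x = b ∨ 1 ≤ excess g x := by
        by_cases hxb : x = b
        · exact Or.inl hxb
        · right
          rw [hexg x, if_pos rfl]
          by_cases hxu : u = x
          · rw [if_pos hxu]
            have hfx : excess f x = excess f u := by rw [hxu]
            linarith
          · rw [if_neg hxu]
            have := hnn x (fun h => hxu h.symm) hxb
            linarith
      have hnn' : ∀ v, v ≠ x → v ≠ b → 0 ≤ excess g v := by
        intro v hvx hvb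
        have h2 : (if x = v then (1:ℤ) else 0) = 0 := if_neg (fun h => hvx h.symm)
        rw [hexg v, h2]
        by_cases hvu : v = u
        · subst hvu
          rw [if_pos rfl]
          linarith
        · rw [if_neg (fun h => hvu h.symm)]
          have := hnn v hvu hvb
          linarith
      obtain ⟨w', f', hf', hoff, hon, hex'⟩ := ih g hgcard hgv x b hu' hnn'
      have henw' : e ∉ w'.edges := fun h => (hon e h).2 hgnone
      refine ⟨Walk.cons e hends w', f', hf', ?_, ?_, ?_⟩
      · intro e' he'
        have h1 : e' ≠ e := fun h => he' (h ▸ List.mem_cons_self)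
        have h2 : e' ∉ w'.edges := fun h => he' (List.mem_cons_of_mem _ h)
        rw [hoff e' h2, hg, Function.update_of_ne h1]
      · intro e' he'
        simp only [Walk.edges, List.mem_cons] at he'
        rcases he' with rfl | he'
        · refine ⟨?_, by rw [hfe]; simp⟩
          rw [hoff e' henw']
          exact hgnone
        · have hne : e' ≠ e := fun h => (hon e' he').2 (h ▸ hgnone)
          have hge : g e' = f e' := by rw [hg, Function.update_of_ne hne]
          exact ⟨(hon e' he').1, hge ▸ (hon e' he').2⟩
      · intro v
        rw [hex' v, hexg v]
        ring

lemma decompose (a b : V) :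
    ∀ (j : ℕ) (f : E → Option (V × V)), G.Valid f → excess f a = j →
    (∀ v, v ≠ a → v ≠ b → excess f v = 0) →
    ∃ P : Fin j → G.Walk a b,
      (∀ i, ∀ e ∈ (P i).edges, f e ≠ none) ∧
      (∀ i i', i ≠ i' → ∀ e ∈ (P i).edges, e ∉ (P i').edges) := by
  intro j
  induction j with
  | zero => intro f _ _ _; exact ⟨fun i => i.elim0, fun i => i.elim0, fun i => i.elim0⟩
  | succ j ih =>
    intro f hf hval hzero
    by_cases hab : a = b
    · subst hab
      exact ⟨fun _ => Walk.nil a, fun i e he => absurd he List.not_mem_nil,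
        fun i i' _ e he => absurd he List.not_mem_nil⟩
    · have hu : a = b ∨ 1 ≤ excess f a := by
        right; rw [hval]; exact_mod_cast Nat.succ_le_succ j.zero_le
      have hnn : ∀ v, v ≠ a → v ≠ b → 0 ≤ excess f v :=
        fun v h1 h2 => le_of_eq (hzero v h1 h2).symm
      obtain ⟨w, f', hf', hoff, hon, hex⟩ :=
        extract_walk (univ.filter (fun e => f e ≠ none)).card f le_rfl hf a b hu hnn
      have hval' : excess f' a = (j : ℕ) := by
        rw [hex a, if_pos rfl, if_neg (fun h => hab h.symm), hval]
        push_cast; ring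
      have hzero' : ∀ v, v ≠ a → v ≠ b → excess f' v = 0 := by
        intro v h1 h2
        rw [hex v, hzero v h1 h2, if_neg (fun h => h1 h.symm), if_neg (fun h => h2 h.symm)]
        ring
      obtain ⟨P', hP1, hP2⟩ := ih f' hf' hval' hzero'
      have hP'f : ∀ i, ∀ e ∈ (P' i).edges, e ∉ w.edges ∧ f e ≠ none := by
        intro i e he
        have h1 : f' e ≠ none := hP1 i e he
        have h2 : e ∉ w.edges := fun h => h1 (hon e h).1
        exact ⟨h2, by rw [← hoff e h2]; exact h1⟩
      refine ⟨Fin.cons w P', ?_, ?_⟩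
      · intro i
        rcases Fin.eq_zero_or_eq_succ i with rfl | ⟨i₁, rfl⟩
        · simp only [Fin.cons_zero]
          exact fun e he => (hon e he).2
        · simp only [Fin.cons_succ]
          exact fun e he => (hP'f i₁ e he).2
      · intro i i' hne
        rcases Fin.eq_zero_or_eq_succ i with rfl | ⟨i₁, rfl⟩ <;>
          rcases Fin.eq_zero_or_eq_succ i' with rfl | ⟨i₂, rfl⟩
        · exact absurd rfl hne
        · simp only [Fin.cons_zero, Fin.cons_succ]
          exact fun e he hc => (hP'f i₂ e hc).1 he
        · simp only [Fin.cons_zero, Fin.cons_succ]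
          exact fun e he => (hP'f i₁ e he).1
        · simp only [Fin.cons_succ]
          exact hP2 i₁ i₂ (fun h => hne (by rw [h]))

end Multigraph
end Decompose


section Assembly
namespace Multigraph
variable {V E : Type} [Fintype V] [Fintype E] {G : Multigraph V E}
open scoped Classical
open Finset

def Walk.appendW : {u v w : V} → G.Walk u v → G.Walk v w → G.Walk u w
  | _, _, _, .nil _, q => q
  | _, _, _, .cons e h p, q => .cons e h (p.appendW q)

lemma Walk.edges_appendW : ∀ {u v w : V} (p : G.Walk u v) (q : G.Walk v w),
    (p.appendW q).edges = p.edges ++ q.edges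
  | _, _, _, .nil _, q => rfl
  | _, _, _, .cons e h p, q => by
      simp [Walk.appendW, Walk.edges, Walk.edges_appendW p q]

/-- Menger, hard direction: no `k` edge-disjoint `a`–`b` paths gives a cut of
at most `k - 1` edges whose removal leaves `b` unreachable from `a`. -/
lemma menger_cut {k : ℕ} {a b : V} (hk : 1 ≤ k) (hab : a ≠ b)
    (hnp : ¬ G.EdgeDisjointPaths k a b) :
    ∃ (X : Finset E) (R : Set V), X.card ≤ k - 1 ∧ a ∈ R ∧ b ∉ R ∧
      (∀ u ∈ R, ∀ w, ∀ p : G.Walk u w, (∀ e ∈ p.edges, e ∉ X) → w ∈ R) := by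
  have main : ∀ i : ℕ, i ≤ k →
      (∃ (X : Finset E) (R : Set V), X.card ≤ k - 1 ∧ a ∈ R ∧ b ∉ R ∧
        (∀ u ∈ R, ∀ w, ∀ p : G.Walk u w, (∀ e ∈ p.edges, e ∉ X) → w ∈ R))
      ∨ (∃ f : E → Option (V × V), G.Valid f ∧ excess f a = i ∧
          ∀ v, v ≠ a → v ≠ b → excess f v = 0) := by
    intro i
    induction i with
    | zero =>
      intro _
      right
      refine ⟨fun _ => none, ?_, ?_, ?_⟩
      · intro e p q h; cases h
      · unfold excess; simp
      · intro v _ _; unfold excess; simp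
    | succ i ih =>
      intro hik
      rcases ih (Nat.le_of_succ_le hik) with hcut | ⟨f, hf, hval, hzero⟩
      · exact Or.inl hcut
      · rcases cut_or_augment hf hab i hval hzero with ⟨f', h1, h2, h3⟩ | ⟨X, R, hXc, h1, h2, h3⟩
        · exact Or.inr ⟨f', h1, h2, h3⟩
        · exact Or.inl ⟨X, R, by omega, h1, h2, h3⟩
  rcases main k le_rfl with hcut | ⟨f, hf, hval, hzero⟩
  · exact hcut
  · exfalso
    apply hnp
    obtain ⟨P, hP1, hP2⟩ := decompose a b k f hf hval hzero
    choose Q hQpath hQsub using fun i => exists_path_of_walk (P i)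
    refine ⟨Q, hQpath, ?_⟩
    intro i j hij e he hc
    exact hP2 i j hij e (hQsub i e he) (hQsub j e hc)

lemma exists_avoiding_walk {k : ℕ} {u v : V} (h : G.EdgeDisjointPaths k u v)
    (X : Finset E) (hX : X.card < k) : ∃ q : G.Walk u v, ∀ e ∈ q.edges, e ∉ X := by
  obtain ⟨P, _, hPdisj⟩ := h
  by_contra hno
  push_neg at hno
  have hchoice : ∀ i : Fin k, ∃ e, e ∈ (P i).edges ∧ e ∈ X := fun i => by
    obtain ⟨e, he1, he2⟩ := hno (P i); exact ⟨e, he1, he2⟩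
  choose g hg1 hg2 using hchoice
  have hinj : Set.InjOn g ↑(univ : Finset (Fin k)) := by
    intro i _ j _ hij
    by_contra hij'
    exact hPdisj i j hij' (g i) (hg1 i) (hij ▸ hg1 j)
  have hcard := Finset.card_le_card_of_injOn g (fun i _ => hg2 i) hinj
  rw [Finset.card_univ, Fintype.card_fin] at hcard
  omega

end Multigraph
end Assembly

/-- if `A` and `B` are nonempty subsets of two distinct
equivalence classes of `∼ₖ`, then some set `X` of at most `k − 1` edges
separates `A` from `B`: in `G − X` there is no path (indeed no walk) from a
vertex of `A` to a vertex of `B`. -/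
theorem simK_separate_two_classes
    {V E : Type} [Fintype V] [Fintype E] (G : Multigraph V E) (k : ℕ)
    (hk : 1 ≤ k) (A B : Set V) (hA : A.Nonempty) (hB : B.Nonempty)
    (hAcl : ∀ a ∈ A, ∀ a' ∈ A, G.SimK k a a')
    (hBcl : ∀ b ∈ B, ∀ b' ∈ B, G.SimK k b b')
    (hAB : ∀ a ∈ A, ∀ b ∈ B, ¬ G.SimK k a b) :
    ∃ X : Finset E, X.card ≤ k - 1 ∧
      ∀ a ∈ A, ∀ b ∈ B, ∀ p : G.Walk a b, ∃ e ∈ p.edges, e ∈ X := by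
  classical
  obtain ⟨a, ha⟩ := hA
  obtain ⟨b, hb⟩ := hB
  have hnsim := hAB a ha b hb
  have hab : a ≠ b := fun h => hnsim (Or.inl h)
  have hnp : ¬ G.EdgeDisjointPaths k a b := fun h => hnsim (Or.inr h)
  obtain ⟨X, R, hXc, haR, hbR, hsep⟩ := Multigraph.menger_cut hk hab hnp
  refine ⟨X, hXc, ?_⟩
  intro a' ha' b' hb' p
  by_contra hcon
  push_neg at hcon
  have hXk : X.card < k := by omega
  have hwa : ∃ q : G.Walk a a', ∀ e ∈ q.edges, e ∉ X := by
    rcases hAcl a ha a' ha' with rfl | hpaths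
    · exact ⟨Multigraph.Walk.nil a, fun e he => absurd he List.not_mem_nil⟩
    · exact Multigraph.exists_avoiding_walk hpaths X hXk
  have hwb : ∃ q : G.Walk b' b, ∀ e ∈ q.edges, e ∉ X := by
    rcases hBcl b hb b' hb' with rfl | hpaths
    · exact ⟨Multigraph.Walk.nil b, fun e he => absurd he List.not_mem_nil⟩
    · obtain ⟨q0, hq0⟩ := Multigraph.exists_avoiding_walk hpaths X hXk
      obtain ⟨q1, hq1⟩ := Multigraph.exists_reverse_walk q0
      exact ⟨q1, fun e he => hq0 e (hq1 e he)⟩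
  obtain ⟨qa, hqa⟩ := hwa
  obtain ⟨qb, hqb⟩ := hwb
  have hbig := (qa.appendW p).appendW qb
  have havoid : ∀ e ∈ ((qa.appendW p).appendW qb).edges, e ∉ X := by
    intro e he
    rw [Multigraph.Walk.edges_appendW, Multigraph.Walk.edges_appendW] at he
    rcases List.mem_append.1 he with he | he
    · rcases List.mem_append.1 he with he | he
      · exact hqa e he
      · exact hcon e he
    · exact hqb e he
  exact hbR (hsep a haR b ((qa.appendW p).appendW qb) havoid)
end

section
/- For every ℓ ≥ 30, the sun graph S_ℓ does not contain two edge-disjoint cycles of length at least ℓ. -/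
open SimpleGraph
open scoped Classical

/-- The sun graph `S_ℓ` with clique size `p`: a complete graph on the
vertices `Sum.inl i` (`i : ZMod p`) together with degree-2 vertices
`Sum.inr i`, where `Sum.inr i` is adjacent exactly to `Sum.inl (i - 1)`
and `Sum.inl i`. -/
def sunGraph (p : ℕ) : SimpleGraph (ZMod p ⊕ ZMod p) :=
  SimpleGraph.fromRel (fun a b =>
    match a, b with
    | Sum.inl _, Sum.inl _ => True
    | Sum.inr i, Sum.inl j => j = i - 1 ∨ j = i
    | _, _ => False)

/-- In a cycle, every vertex of the support is incident to two distinct edges. -/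
lemma cycle_two_edges {V : Type*} {G : SimpleGraph V} {u v : V} {C : G.Walk u u}
    (hC : C.IsCycle) (hv : v ∈ C.support) :
    ∃ x y, x ≠ y ∧ s(v, x) ∈ C.edges ∧ s(v, y) ∈ C.edges := by
  have hC' : (C.rotate v hv).IsCycle := hC.rotate hv
  have hrot : ∀ e, e ∈ (C.rotate v hv).edges → e ∈ C.edges := fun e he =>
    (C.rotate_edges v hv).mem_iff.mp he
  obtain ⟨w, hadj, q, hq⟩ := SimpleGraph.Walk.not_nil_iff.mp hC'.not_nil
  have hqnil : ¬ q.Nil := by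
    intro h
    have h3 := hC'.three_le_length
    rw [hq] at h3
    simp [SimpleGraph.Walk.nil_iff_length_eq.mp h] at h3
  have hqr : ¬ q.reverse.Nil := by
    rw [SimpleGraph.Walk.nil_iff_length_eq] at hqnil ⊢
    simpa using hqnil
  obtain ⟨y, hadj2, q2, hq2⟩ := SimpleGraph.Walk.not_nil_iff.mp hqr
  have h1 : s(v, w) ∈ (C.rotate v hv).edges := by rw [hq]; simp
  have h2 : s(v, y) ∈ q.edges := by
    have : s(v, y) ∈ q.reverse.edges := by rw [hq2]; simp
    rwa [SimpleGraph.Walk.edges_reverse, List.mem_reverse] at this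
  have hne : w ≠ y := by
    rintro rfl
    have hnodup := hC'.edges_nodup
    rw [hq, SimpleGraph.Walk.edges_cons, List.nodup_cons] at hnodup
    exact hnodup.1 h2
  refine ⟨w, y, hne, hrot _ h1, hrot _ ?_⟩
  rw [hq, SimpleGraph.Walk.edges_cons]
  exact List.mem_cons_of_mem _ h2

/-- The neighbors of `Sum.inr i` in the sun graph. -/
lemma sunGraph_adj_inr {p : ℕ} {i : ZMod p} {z : ZMod p ⊕ ZMod p}
    (h : (sunGraph p).Adj (Sum.inr i) z) : z = Sum.inl (i - 1) ∨ z = Sum.inl i := by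
  rw [sunGraph, SimpleGraph.fromRel_adj] at h
  obtain ⟨-, h | h⟩ := h
  · cases z with
    | inl j =>
      simp only at h
      rcases h with h | h <;> simp [h]
    | inr j => simp at h
  · cases z <;> simp at h

/-- Any cycle through `Sum.inr i` uses the edge `s(Sum.inr i, Sum.inl i)`. -/
lemma cycle_edge_inr {p : ℕ} {u : ZMod p ⊕ ZMod p} {C : (sunGraph p).Walk u u}
    (hC : C.IsCycle) {i : ZMod p} (hi : Sum.inr i ∈ C.support) :
    s(Sum.inr i, Sum.inl i) ∈ C.edges := by
  obtain ⟨x, y, hxy, hx, hy⟩ := cycle_two_edges hC hi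
  have hax := sunGraph_adj_inr (C.adj_of_mem_edges hx)
  have hay := sunGraph_adj_inr (C.adj_of_mem_edges hy)
  rcases hax with hax | hax
  · rcases hay with hay | hay
    · exact absurd (hax.trans hay.symm) hxy
    · rwa [hay] at hy
  · rwa [hax] at hx

/-- The set of `Sum.inr`-indices visited by a walk. -/
def rightVerts {p : ℕ} {u v : ZMod p ⊕ ZMod p} (C : (sunGraph p).Walk u v) :
    Finset (ZMod p) :=
  (C.support.filterMap Sum.getRight?).toFinset

lemma mem_rightVerts {p : ℕ} {u v : ZMod p ⊕ ZMod p} {C : (sunGraph p).Walk u v}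
    {i : ZMod p} : i ∈ rightVerts C ↔ (Sum.inr i : ZMod p ⊕ ZMod p) ∈ C.support := by
  simp only [rightVerts, List.mem_toFinset, List.mem_filterMap,
    Sum.getRight?_eq_some_iff]
  constructor
  · rintro ⟨a, ha, rfl⟩; exact ha
  · intro h; exact ⟨_, h, rfl⟩

/-- Counting: a cycle of length `L` in the sun graph visits at least `L - p`
of the `Sum.inr` vertices. -/
lemma cycle_inr_count {p : ℕ} [NeZero p] {u : ZMod p ⊕ ZMod p}
    {C : (sunGraph p).Walk u u} (hC : C.IsCycle) :
    C.length ≤ p + (rightVerts C).card := by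
  classical
  set T : Finset (ZMod p ⊕ ZMod p) := C.support.tail.toFinset with hT
  have hcardT : T.card = C.length := by
    rw [hT, List.toFinset_card_of_nodup hC.support_nodup, List.length_tail,
      C.length_support]
    omega
  have hsplit : T.card = (T.filter (fun z => z.isLeft)).card
      + (T.filter (fun z => ¬ z.isLeft)).card := (Finset.card_filter_add_card_filter_not (s := T)
        (fun z : ZMod p ⊕ ZMod p => z.isLeft)).symm
  have hleft : (T.filter (fun z => z.isLeft)).card ≤ p := by
    have hsub : T.filter (fun z => z.isLeft) ⊆ Finset.univ.image Sum.inl := by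
      intro z hz
      rw [Finset.mem_filter] at hz
      cases z with
      | inl a => exact Finset.mem_image_of_mem _ (Finset.mem_univ a)
      | inr a => simp at hz
    calc (T.filter (fun z => z.isLeft)).card ≤ (Finset.univ.image (Sum.inl : ZMod p → _)).card :=
          Finset.card_le_card hsub
      _ = p := by rw [Finset.card_image_of_injective _ Sum.inl_injective, Finset.card_univ,
            ZMod.card]
  have hright : (T.filter (fun z => ¬ z.isLeft)).card ≤ (rightVerts C).card := by
    have hsub : T.filter (fun z => ¬ z.isLeft) ⊆ (rightVerts C).image Sum.inr := by
      intro z hz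
      rw [Finset.mem_filter] at hz
      cases z with
      | inl a => simp at hz
      | inr a =>
        refine Finset.mem_image_of_mem _ ?_
        rw [mem_rightVerts]
        have : Sum.inr a ∈ C.support.tail := by
          rw [hT, List.mem_toFinset] at hz
          exact hz.1
        exact List.mem_of_mem_tail this
    calc (T.filter (fun z => ¬ z.isLeft)).card ≤ ((rightVerts C).image Sum.inr).card :=
          Finset.card_le_card hsub
      _ ≤ (rightVerts C).card := Finset.card_image_le
  omega

/-- for every `ℓ ≥ 30`, the sun graph `S_ℓ` (with clique
size `p = ⌊2(ℓ−1)/3⌋`) does not contain two edge-disjoint cycles of length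
at least `ℓ`. -/
theorem sun_no_two_edge_disjoint_long_cycles (ℓ : ℕ) (hℓ : 30 ≤ ℓ) :
    ¬ ∃ (x y : ZMod (2 * (ℓ - 1) / 3) ⊕ ZMod (2 * (ℓ - 1) / 3))
        (C₁ : (sunGraph (2 * (ℓ - 1) / 3)).Walk x x)
        (C₂ : (sunGraph (2 * (ℓ - 1) / 3)).Walk y y),
      C₁.IsCycle ∧ C₂.IsCycle ∧ ℓ ≤ C₁.length ∧ ℓ ≤ C₂.length ∧
      ∀ e ∈ C₁.edges, e ∉ C₂.edges := by
  classical
  set p : ℕ := 2 * (ℓ - 1) / 3 with hp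
  haveI : NeZero p := ⟨by omega⟩
  rintro ⟨x, y, C₁, C₂, hC₁, hC₂, hL₁, hL₂, hdisj⟩
  have h1 : C₁.length ≤ p + (rightVerts C₁).card := cycle_inr_count hC₁
  have h2 : C₂.length ≤ p + (rightVerts C₂).card := cycle_inr_count hC₂
  have hDisj : Disjoint (rightVerts C₁) (rightVerts C₂) := by
    rw [Finset.disjoint_left]
    intro i hi1 hi2
    rw [mem_rightVerts] at hi1 hi2
    exact hdisj _ (cycle_edge_inr hC₁ hi1) (cycle_edge_inr hC₂ hi2)
  have hcard : (rightVerts C₁).card + (rightVerts C₂).card ≤ p := by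
    rw [← Finset.card_union_of_disjoint hDisj]
    calc ((rightVerts C₁) ∪ (rightVerts C₂)).card ≤ (Finset.univ : Finset (ZMod p)).card :=
          Finset.card_le_card (Finset.subset_univ _)
      _ = p := by rw [Finset.card_univ, ZMod.card]
  omega
end

section
/- For every ℓ ≥ 30 and every set X of at most ℓ/30 edges of the sun graph S_ℓ, the graph S_ℓ − X still contains a cycle of length at least ℓ. -/
open SimpleGraph

namespace SunAux

variable (p : ℕ) (X : Finset (Sym2 (ZMod p ⊕ ZMod p))) (s : ZMod p)

/-- clique vertex at offset `t` from `s`. -/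
def vv (t : ℕ) : ZMod p ⊕ ZMod p := Sum.inl (s + (t : ZMod p))

/-- sun vertex at offset `t` from `s`. -/
def ww (t : ℕ) : ZMod p ⊕ ZMod p := Sum.inr (s + (t : ZMod p))

/-- offset of a vertex (w-vertices shifted down by one). -/
def offV : ZMod p ⊕ ZMod p → ℕ
  | Sum.inl z => (z - s).val
  | Sum.inr z => (z - s).val - 1

/-- minimum offset of the two endpoints of an edge. -/
def minOff (e : Sym2 (ZMod p ⊕ ZMod p)) : ℕ :=
  Sym2.lift ⟨fun x y => min (offV p s x) (offV p s y), fun x y => min_comm _ _⟩ e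

@[simp] lemma minOff_mk (x y : ZMod p ⊕ ZMod p) :
    minOff p s s(x, y) = min (offV p s x) (offV p s y) := rfl

/-- deleted edges whose minimal offset is at least `a`. -/
def R (a : ℕ) : Finset (Sym2 (ZMod p ⊕ ZMod p)) := X.filter (fun e => a ≤ minOff p s e)

lemma R_mono {a b : ℕ} (h : a ≤ b) : R p X s b ⊆ R p X s a := by
  intro e he
  simp only [R, Finset.mem_filter] at he ⊢
  exact ⟨he.1, le_trans h he.2⟩

lemma R_subset : R p X s a ⊆ X := Finset.filter_subset _ _

section basic

variable {p}

lemma cast_inj_of_lt (hp : 0 < p) {t t' : ℕ} (ht : t < p) (ht' : t' < p)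
    (h : (t : ZMod p) = t') : t = t' := by
  haveI : NeZero p := ⟨by omega⟩
  have := congrArg ZMod.val h
  rwa [ZMod.val_natCast, ZMod.val_natCast, Nat.mod_eq_of_lt ht, Nat.mod_eq_of_lt ht'] at this

lemma vv_inj (hp : 0 < p) {t t' : ℕ} (ht : t < p) (ht' : t' < p)
    (h : vv p s t = vv p s t') : t = t' := by
  simp only [vv, Sum.inl.injEq] at h
  exact cast_inj_of_lt hp ht ht' (by exact add_left_cancel h)

lemma ww_inj (hp : 0 < p) {t t' : ℕ} (ht : t < p) (ht' : t' < p)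
    (h : ww p s t = ww p s t') : t = t' := by
  simp only [ww, Sum.inr.injEq] at h
  exact cast_inj_of_lt hp ht ht' (by exact add_left_cancel h)

lemma vv_ne_inls (hp : 0 < p) {t : ℕ} (h1 : 1 ≤ t) (ht : t < p) :
    vv p s t ≠ Sum.inl s := by
  intro h
  have h0 : vv p s t = vv p s 0 := by simpa [vv] using h
  have := vv_inj s hp ht hp h0
  omega

lemma ww_ne_inrs (hp : 0 < p) {t : ℕ} (h1 : 1 ≤ t) (ht : t < p) :
    ww p s t ≠ Sum.inr s := by
  intro h
  have h0 : ww p s t = ww p s 0 := by simpa [ww] using h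
  have := ww_inj s hp ht hp h0
  omega

lemma vv_ne_vv (hp : 0 < p) {t t' : ℕ} (ht : t < p) (ht' : t' < p) (h : t ≠ t') :
    vv p s t ≠ vv p s t' := fun hc => h (vv_inj s hp ht ht' hc)

lemma offV_vv (hp : 0 < p) {t : ℕ} (ht : t < p) : offV p s (vv p s t) = t := by
  haveI : NeZero p := ⟨by omega⟩
  simp only [offV, vv, add_sub_cancel_left, ZMod.val_natCast]
  exact Nat.mod_eq_of_lt ht

lemma offV_ww (hp : 0 < p) {t : ℕ} (ht : t < p) : offV p s (ww p s t) = t - 1 := by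
  haveI : NeZero p := ⟨by omega⟩
  simp only [offV, ww, add_sub_cancel_left, ZMod.val_natCast]
  rw [Nat.mod_eq_of_lt ht]

lemma cast_pred (hp : 0 < p) : ((p - 1 : ℕ) : ZMod p) = -1 := by
  have h1 : (1 : ℕ) ≤ p := hp
  push_cast [Nat.cast_sub h1]
  simp [ZMod.natCast_self]

end basic


section adj

variable {p}

lemma sun_adj_ll {a b : ZMod p} (h : a ≠ b) :
    (sunGraph p).Adj (Sum.inl a) (Sum.inl b) := by
  simp only [sunGraph, SimpleGraph.fromRel_adj]
  exact ⟨by simp [h], Or.inl trivial⟩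

lemma sun_adj_rl {i j : ZMod p} (h : j = i - 1 ∨ j = i) :
    (sunGraph p).Adj (Sum.inr i) (Sum.inl j) := by
  simp only [sunGraph, SimpleGraph.fromRel_adj]
  exact ⟨by simp, Or.inl h⟩

lemma adj_del {x y : ZMod p ⊕ ZMod p} (hadj : (sunGraph p).Adj x y)
    (h : s(x, y) ∉ X) : ((sunGraph p).deleteEdges (↑X : Set _)).Adj x y := by
  rw [SimpleGraph.deleteEdges_adj]
  exact ⟨hadj, by simpa using h⟩

end adj

/-- both edges of the `w`-route at index `t` survive. -/
def wgood (t : ℕ) : Prop :=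
  s(vv p s (t - 1), ww p s t) ∉ X ∧ s(ww p s t, vv p s t) ∉ X

instance : DecidablePred (wgood p X s) := fun _ => instDecidableAnd

/-- property of the vertices of the partial walk built from offset `a`. -/
def SuppOK (a : ℕ) (x : ZMod p ⊕ ZMod p) : Prop :=
  x = Sum.inl s ∨ x = Sum.inr s ∨ (∃ t, a ≤ t ∧ t < p ∧ x = vv p s t) ∨
    (∃ t, a < t ∧ t < p ∧ x = ww p s t)

/-- property of the edges of the partial walk built from offset `a`:
the only edge through `Sum.inl s` is the final closing edge. -/
def EdgeOK (e : Sym2 (ZMod p ⊕ ZMod p)) : Prop :=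
  (Sum.inl s : ZMod p ⊕ ZMod p) ∈ e → e = s(Sum.inr s, Sum.inl s)

section spec

variable {p}

lemma suppOK_mono {a b : ℕ} (h : a ≤ b) {x : ZMod p ⊕ ZMod p}
    (hx : SuppOK p s b x) : SuppOK p s a x := by
  rcases hx with h1 | h1 | ⟨t, h1, h2, h3⟩ | ⟨t, h1, h2, h3⟩
  · exact Or.inl h1
  · exact Or.inr (Or.inl h1)
  · exact Or.inr (Or.inr (Or.inl ⟨t, by omega, h2, h3⟩))
  · exact Or.inr (Or.inr (Or.inr ⟨t, by omega, h2, h3⟩))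

lemma vv_not_in (hp : 0 < p) {l : List (ZMod p ⊕ ZMod p)} {a b : ℕ}
    (hl : ∀ x ∈ l, SuppOK p s b x) (h1 : 1 ≤ a) (hab : a < b) (hap : a < p) :
    vv p s a ∉ l := by
  intro hmem
  rcases hl _ hmem with h | h | ⟨t, ht1, ht2, ht3⟩ | ⟨t, _, _, ht3⟩
  · exact vv_ne_inls s hp h1 hap h
  · exact (by simp [vv] : vv p s a ≠ Sum.inr s) h
  · have := vv_inj s hp hap ht2 ht3
    omega
  · exact (by simp [vv, ww] : vv p s a ≠ ww p s t) ht3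

lemma ww_not_in (hp : 0 < p) {l : List (ZMod p ⊕ ZMod p)} {t b : ℕ}
    (hl : ∀ x ∈ l, SuppOK p s b x) (h1 : 1 ≤ t) (htb : t ≤ b) (htp : t < p) :
    ww p s t ∉ l := by
  intro hmem
  rcases hl _ hmem with h | h | ⟨u, _, _, hu3⟩ | ⟨u, hu1, hu2, hu3⟩
  · exact (by simp [ww] : ww p s t ≠ Sum.inl s) h
  · exact ww_ne_inrs s hp h1 htp h
  · exact (by simp [vv, ww] : ww p s t ≠ vv p s u) hu3
  · have := ww_inj s hp htp hu2 hu3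
    omega

end spec


section chordcard

variable {p}

lemma chord_card (hp : 3 ≤ p) {a b : ℕ} (h1 : 1 ≤ a) (hab : a < b) (hb : b ≤ p - 1)
    (hw : ¬ wgood p X s (a + 1))
    (hch : ∀ b', a < b' → b' < b → s(vv p s a, vv p s b') ∈ X) :
    (R p X s b).card + (b - a) ≤ (R p X s a).card := by
  have hp0 : 0 < p := by omega
  have hap : a < p := by omega
  have hbp : b < p := by omega
  have ha1p : a + 1 < p := by omega
  -- the blocked w-edge
  obtain ⟨ew, hewX, hewOff, hewW⟩ :
      ∃ e, e ∈ X ∧ minOff p s e = a ∧ ww p s (a + 1) ∈ e := by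
    rw [wgood, not_and_or, not_not, not_not] at hw
    rcases hw with hw | hw
    · refine ⟨_, hw, ?_, ?_⟩
      · rw [minOff_mk, offV_vv s hp0 (by omega : a + 1 - 1 < p),
          offV_ww s hp0 (by omega : a + 1 < p)]
        omega
      · simp [Sym2.mem_iff]
    · refine ⟨_, hw, ?_, ?_⟩
      · rw [minOff_mk, offV_ww s hp0 (by omega : a + 1 < p),
          offV_vv s hp0 (by omega : a + 1 < p)]
        omega
      · simp [Sym2.mem_iff]
  set D : Finset (Sym2 (ZMod p ⊕ ZMod p)) :=
    insert ew ((Finset.Ioo a b).image (fun b' => s(vv p s a, vv p s b'))) with hD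
  have hoffD : ∀ e ∈ D, minOff p s e = a := by
    intro e he
    rcases Finset.mem_insert.1 he with rfl | he
    · exact hewOff
    · obtain ⟨b', hb', rfl⟩ := Finset.mem_image.1 he
      rw [Finset.mem_Ioo] at hb'
      rw [minOff_mk, offV_vv s hp0 hap, offV_vv s hp0 (by omega : b' < p)]
      omega
  have hDsub : D ⊆ R p X s a := by
    intro e he
    rw [R, Finset.mem_filter]
    refine ⟨?_, le_of_eq (hoffD e he).symm⟩
    rcases Finset.mem_insert.1 he with rfl | he
    · exact hewX
    · obtain ⟨b', hb', rfl⟩ := Finset.mem_image.1 he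
      rw [Finset.mem_Ioo] at hb'
      exact hch b' hb'.1 hb'.2
  have hDis : Disjoint (R p X s b) D := by
    rw [Finset.disjoint_left]
    intro e heR heD
    rw [R, Finset.mem_filter] at heR
    have := hoffD e heD
    omega
  have hDcard : D.card = b - a := by
    rw [hD, Finset.card_insert_of_notMem, Finset.card_image_of_injOn, Nat.card_Ioo]
    · omega
    · intro b₁ hb₁ b₂ hb₂ hEq
      rw [Finset.coe_Ioo, Set.mem_Ioo] at hb₁ hb₂
      rcases Sym2.eq_iff.1 hEq with ⟨_, h2⟩ | ⟨h2, h3⟩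
      · exact vv_inj s hp0 (by omega) (by omega) h2
      · exact absurd h2.symm (vv_ne_vv s hp0 (by omega) hap (by omega))
    · intro hmem
      obtain ⟨b', _, hEq⟩ := Finset.mem_image.1 hmem
      rw [← hEq] at hewW
      rcases Sym2.mem_iff.1 hewW with h | h
      · exact (by simp [vv, ww] : ww p s (a+1) ≠ vv p s a) h
      · exact (by simp [vv, ww] : ww p s (a+1) ≠ vv p s b') h
  have hsub : R p X s b ∪ D ⊆ R p X s a :=
    Finset.union_subset (R_mono p X s (le_of_lt hab)) hDsub
  have := Finset.card_le_card hsub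
  rw [Finset.card_union_of_disjoint hDis, hDcard] at this
  exact this

end chordcard


end SunAux

namespace SunAux

/-- Build, from clique offset `a` (with `1 ≤ a ≤ p-1`), a path from `vv a` to
`Sum.inl s` which goes through the high-offset part of the sun, together with
its specification. -/
def build {p : ℕ} (X : Finset (Sym2 (ZMod p ⊕ ZMod p))) (s : ZMod p)
    (hp : 3 ≤ p)
    (hs : ∀ e ∈ X, (Sum.inl s : ZMod p ⊕ ZMod p) ∉ e ∧
      (Sum.inr s : ZMod p ⊕ ZMod p) ∉ e ∧ (Sum.inl (s - 1) : ZMod p ⊕ ZMod p) ∉ e)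
    (a : ℕ) (ha0 : 1 ≤ a) (ha : a ≤ p - 1) :
    { w : ((sunGraph p).deleteEdges (↑X : Set (Sym2 (ZMod p ⊕ ZMod p)))).Walk
        (vv p s a) (Sum.inl s) //
      w.IsPath ∧ (∀ x ∈ w.support, SuppOK p s a x) ∧ (∀ e ∈ w.edges, EdgeOK p s e) ∧
      2 * (p - a) ≤ w.length + 2 * (R p X s a).card } := by
  have hp0 : 0 < p := by omega
  by_cases hlast : a = p - 1
  · -- base case: close up through `ww p = Sum.inr s`
    subst hlast
    have hv : (s + ((p - 1 : ℕ) : ZMod p)) = s - 1 := by rw [cast_pred hp0]; ring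
    have h2 : ((sunGraph p).deleteEdges (↑X : Set _)).Adj (Sum.inr s) (Sum.inl s) :=
      adj_del X (sun_adj_rl (Or.inr rfl)) (fun hmem => (hs _ hmem).1 (by simp))
    have h1 : ((sunGraph p).deleteEdges (↑X : Set _)).Adj (vv p s (p - 1)) (Sum.inr s) := by
      simp only [vv]
      exact adj_del X ((sun_adj_rl (Or.inl hv)).symm)
        (fun hmem => (hs _ hmem).2.1 (by simp))
    refine ⟨SimpleGraph.Walk.cons h1 (SimpleGraph.Walk.cons h2 SimpleGraph.Walk.nil),
      ?_, ?_, ?_, ?_⟩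
    · rw [SimpleGraph.Walk.isPath_def]
      simp only [SimpleGraph.Walk.support_cons, SimpleGraph.Walk.support_nil]
      refine List.nodup_cons.2 ⟨?_, List.nodup_cons.2 ⟨?_, List.nodup_singleton _⟩⟩
      · intro hmem
        rcases List.mem_cons.1 hmem with h | h
        · exact (by simp [vv] : vv p s (p - 1) ≠ Sum.inr s) h
        · rw [List.mem_singleton] at h
          exact vv_ne_inls s hp0 (by omega) (by omega) h
      · intro hmem
        rw [List.mem_singleton] at hmem
        simp at hmem
    · intro x hx
      simp only [SimpleGraph.Walk.support_cons, SimpleGraph.Walk.support_nil] at hx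
      rcases List.mem_cons.1 hx with rfl | hx
      · exact Or.inr (Or.inr (Or.inl ⟨p - 1, le_refl _, by omega, rfl⟩))
      rcases List.mem_cons.1 hx with rfl | hx
      · exact Or.inr (Or.inl rfl)
      · rw [List.mem_singleton] at hx
        exact Or.inl hx
    · intro e he
      simp only [SimpleGraph.Walk.edges_cons, SimpleGraph.Walk.edges_nil] at he
      rcases List.mem_cons.1 he with rfl | he
      · intro hmem
        rcases Sym2.mem_iff.1 hmem with h | h
        · exact absurd h.symm (vv_ne_inls s hp0 (by omega) (by omega))
        · simp at h
      · rw [List.mem_singleton] at he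
        subst he
        intro _
        rfl
    · simp only [SimpleGraph.Walk.length_cons, SimpleGraph.Walk.length_nil]
      omega
  · have hap : a < p - 1 := by omega
    by_cases hw : wgood p X s (a + 1)
    · -- w-route step
      obtain ⟨W, hWpath, hWsupp, hWedge, hWlen⟩ :=
        build X s hp hs (a + 1) (by omega) (by omega)
      have hcast : (s + (a : ZMod p)) = (s + ((a + 1 : ℕ) : ZMod p)) - 1 := by
        push_cast
        ring
      have h1 : ((sunGraph p).deleteEdges (↑X : Set _)).Adj (vv p s a) (ww p s (a + 1)) := by
        simp only [vv, ww]
        exact adj_del X ((sun_adj_rl (Or.inl hcast)).symm).symm.symm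
          (by simpa only [vv, ww, Nat.add_sub_cancel] using hw.1)
      have h2 : ((sunGraph p).deleteEdges (↑X : Set _)).Adj (ww p s (a + 1)) (vv p s (a + 1)) := by
        simp only [vv, ww]
        exact adj_del X (sun_adj_rl (Or.inr rfl)) (by simpa only [vv, ww] using hw.2)
      refine ⟨SimpleGraph.Walk.cons h1 (SimpleGraph.Walk.cons h2 W), ?_, ?_, ?_, ?_⟩
      · refine SimpleGraph.Walk.IsPath.cons (SimpleGraph.Walk.IsPath.cons hWpath ?_) ?_
        · exact ww_not_in s hp0 hWsupp (by omega) (le_refl _) (by omega)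
        · rw [SimpleGraph.Walk.support_cons]
          intro hmem
          rcases List.mem_cons.1 hmem with h | h
          · exact (by simp [vv, ww] : vv p s a ≠ ww p s (a + 1)) h
          · exact vv_not_in s hp0 hWsupp ha0 (by omega) (by omega) h
      · intro x hx
        simp only [SimpleGraph.Walk.support_cons] at hx
        rcases List.mem_cons.1 hx with rfl | hx
        · exact Or.inr (Or.inr (Or.inl ⟨a, le_refl _, by omega, rfl⟩))
        rcases List.mem_cons.1 hx with rfl | hx
        · exact Or.inr (Or.inr (Or.inr ⟨a + 1, by omega, by omega, rfl⟩))
        · exact suppOK_mono s (by omega) (hWsupp x hx)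
      · intro e he
        simp only [SimpleGraph.Walk.edges_cons] at he
        rcases List.mem_cons.1 he with rfl | he
        · intro hmem
          rcases Sym2.mem_iff.1 hmem with h | h
          · exact absurd h.symm (vv_ne_inls s hp0 (by omega) (by omega))
          · exact absurd h (by simp [ww])
        rcases List.mem_cons.1 he with rfl | he
        · intro hmem
          rcases Sym2.mem_iff.1 hmem with h | h
          · exact absurd h (by simp [ww])
          · exact absurd h.symm (vv_ne_inls s hp0 (by omega) (by omega))
        · exact hWedge e he
      · simp only [SimpleGraph.Walk.length_cons]
        have hmono : (R p X s (a + 1)).card ≤ (R p X s a).card :=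
          Finset.card_le_card (R_mono p X s (by omega))
        omega
    · -- chord step
      have hex : ∃ b, a < b ∧ b ≤ p - 1 ∧ s(vv p s a, vv p s b) ∉ X := by
        refine ⟨p - 1, hap, le_refl _, fun hmem => (hs _ hmem).2.2 ?_⟩
        rw [Sym2.mem_iff]
        right
        simp only [vv]
        rw [cast_pred hp0]
        ring_nf
      have hbspec := Nat.find_spec hex
      have hbmin : ∀ m, m < Nat.find hex →
          ¬(a < m ∧ m ≤ p - 1 ∧ s(vv p s a, vv p s m) ∉ X) :=
        fun m hm => Nat.find_min hex hm
      generalize hbg : Nat.find hex = b at hbspec hbmin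
      obtain ⟨hab, hb1, hbX⟩ := hbspec
      have hch : ∀ b', a < b' → b' < b → s(vv p s a, vv p s b') ∈ X := by
        intro b' hb'1 hb'2
        by_contra hnot
        exact hbmin b' hb'2 ⟨hb'1, by omega, hnot⟩
      obtain ⟨W, hWpath, hWsupp, hWedge, hWlen⟩ := build X s hp hs b (by omega) hb1
      have hne : (s + (a : ZMod p)) ≠ (s + (b : ZMod p)) := by
        intro h
        exact (vv_ne_vv s hp0 (by omega) (by omega) (by omega : a ≠ b)) (by simp [vv, h])
      have h1 : ((sunGraph p).deleteEdges (↑X : Set _)).Adj (vv p s a) (vv p s b) := by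
        simp only [vv]
        exact adj_del X (sun_adj_ll hne) (by simpa only [vv] using hbX)
      refine ⟨SimpleGraph.Walk.cons h1 W, ?_, ?_, ?_, ?_⟩
      · exact SimpleGraph.Walk.IsPath.cons hWpath
          (vv_not_in s hp0 hWsupp ha0 hab (by omega))
      · intro x hx
        simp only [SimpleGraph.Walk.support_cons] at hx
        rcases List.mem_cons.1 hx with rfl | hx
        · exact Or.inr (Or.inr (Or.inl ⟨a, le_refl _, by omega, rfl⟩))
        · exact suppOK_mono s (by omega) (hWsupp x hx)
      · intro e he
        simp only [SimpleGraph.Walk.edges_cons] at he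
        rcases List.mem_cons.1 he with rfl | he
        · intro hmem
          rcases Sym2.mem_iff.1 hmem with h | h
          · exact absurd h.symm (vv_ne_inls s hp0 (by omega) (by omega))
          · exact absurd h.symm (vv_ne_inls s hp0 (by omega) (by omega))
        · exact hWedge e he
      · simp only [SimpleGraph.Walk.length_cons]
        have := chord_card X s hp ha0 hab hb1 hw hch
        omega
termination_by p - a
decreasing_by all_goals omega

end SunAux



namespace SunAux

/-- projection to the `ZMod p` coordinate. -/
def proj {p : ℕ} : ZMod p ⊕ ZMod p → ZMod p := Sum.elim id id

/-- the base vertices that an edge can "touch". -/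
def eCands {p : ℕ} (e : Sym2 (ZMod p ⊕ ZMod p)) : Finset (ZMod p) :=
  Sym2.lift ⟨fun x y => ({proj x, proj x + 1, proj y, proj y + 1} : Finset (ZMod p)),
    by
      intro x y
      ext z
      simp only [Finset.mem_insert, Finset.mem_singleton]
      tauto⟩ e

lemma eCands_card {p : ℕ} (e : Sym2 (ZMod p ⊕ ZMod p)) : (eCands e).card ≤ 4 := by
  induction e using Sym2.inductionOn with
  | hf x y =>
    show ({proj x, proj x + 1, proj y, proj y + 1} : Finset (ZMod p)).card ≤ 4
    refine le_trans (Finset.card_insert_le _ _) ?_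
    refine le_trans (Nat.add_le_add_right (Finset.card_insert_le _ _) 1) ?_
    refine le_trans (Nat.add_le_add_right (Nat.add_le_add_right (Finset.card_insert_le _ _) 1) 1) ?_
    simp

lemma mem_eCands {p : ℕ} {e : Sym2 (ZMod p ⊕ ZMod p)} {z : ZMod p}
    (h : (Sum.inl z : ZMod p ⊕ ZMod p) ∈ e ∨ (Sum.inr z : ZMod p ⊕ ZMod p) ∈ e ∨
      (Sum.inl (z - 1) : ZMod p ⊕ ZMod p) ∈ e) : z ∈ eCands e := by
  induction e using Sym2.inductionOn with
  | hf x y =>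
    show z ∈ ({proj x, proj x + 1, proj y, proj y + 1} : Finset (ZMod p))
    simp only [Finset.mem_insert, Finset.mem_singleton]
    rcases h with h | h | h <;> rw [Sym2.mem_iff] at h <;> rcases h with h | h <;>
        subst h <;> simp [proj, sub_add_cancel]

lemma exists_good_s {p : ℕ} (X : Finset (Sym2 (ZMod p ⊕ ZMod p))) (hp : 0 < p)
    (hcard : 4 * X.card < p) :
    ∃ s : ZMod p, ∀ e ∈ X, (Sum.inl s : ZMod p ⊕ ZMod p) ∉ e ∧
      (Sum.inr s : ZMod p ⊕ ZMod p) ∉ e ∧ (Sum.inl (s - 1) : ZMod p ⊕ ZMod p) ∉ e := by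
  haveI : NeZero p := ⟨by omega⟩
  by_contra hcon
  rw [not_exists] at hcon
  have hcon' : ∀ t : ZMod p, ∃ e ∈ X,
      (Sum.inl t : ZMod p ⊕ ZMod p) ∈ e ∨ (Sum.inr t : ZMod p ⊕ ZMod p) ∈ e ∨
        (Sum.inl (t - 1) : ZMod p ⊕ ZMod p) ∈ e := by
    intro t
    by_contra hno
    push_neg at hno
    exact hcon t (fun e he => ⟨(hno e he).1, (hno e he).2.1, (hno e he).2.2⟩)
  choose f hfX hftouch using hcon'
  have hmap : ∀ z : ZMod p, z ∈ (Finset.univ : Finset (ZMod p)) → f z ∈ X :=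
    fun z _ => hfX z
  have hkey := Finset.card_le_mul_card_image_of_maps_to hmap 4 ?_
  · rw [Finset.card_univ, ZMod.card p] at hkey
    omega
  · intro e heX
    refine le_trans (Finset.card_le_card ?_) (eCands_card e)
    intro z hz
    rw [Finset.mem_filter] at hz
    exact mem_eCands (hz.2 ▸ hftouch z)

lemma main_cycle {p : ℕ} (X : Finset (Sym2 (ZMod p ⊕ ZMod p))) (hp : 3 ≤ p)
    (hcard : 4 * X.card < p) :
    ∃ (x : ZMod p ⊕ ZMod p)
      (C : ((sunGraph p).deleteEdges (↑X : Set (Sym2 (ZMod p ⊕ ZMod p)))).Walk x x),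
      C.IsCycle ∧ 2 * p ≤ C.length + 2 * X.card + 1 := by
  have hp0 : 0 < p := by omega
  obtain ⟨s, hs⟩ := exists_good_s X hp0 hcard
  obtain ⟨W, hWpath, hWsupp, hWedge, hWlen⟩ := build X s hp hs 1 (le_refl _) (by omega)
  have hne : s ≠ s + ((1 : ℕ) : ZMod p) := by
    intro h
    have h2 : s + ((1 : ℕ) : ZMod p) = s + ((0 : ℕ) : ZMod p) := by
      rw [← h]
      simp
    have := cast_inj_of_lt hp0 (by omega : 1 < p) hp0 (add_left_cancel h2)
    omega
  have h1 : ((sunGraph p).deleteEdges (↑X : Set _)).Adj (Sum.inl s) (vv p s 1) := by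
    simp only [vv]
    exact adj_del X (sun_adj_ll hne) (fun hmem => (hs _ hmem).1 (by simp))
  refine ⟨Sum.inl s, SimpleGraph.Walk.cons h1 W, ?_, ?_⟩
  · rw [SimpleGraph.Walk.cons_isCycle_iff]
    refine ⟨hWpath, ?_⟩
    intro hmem
    have h2 := hWedge _ hmem (by simp)
    rcases Sym2.eq_iff.1 h2 with ⟨h3, _⟩ | ⟨_, h4⟩
    · simp at h3
    · exact (by simp [vv] : vv p s 1 ≠ Sum.inr s) h4
  · rw [SimpleGraph.Walk.length_cons]
    have hRX : (R p X s 1).card ≤ X.card := Finset.card_le_card (R_subset p X s)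
    omega

end SunAux

/-- for every `ℓ ≥ 30` and every set `X` of at most `ℓ/30`
edges of the sun graph `S_ℓ`, the graph `S_ℓ − X` still contains a cycle of
length at least `ℓ`. -/
theorem sun_no_small_hitting_set (ℓ : ℕ) (hℓ : 30 ≤ ℓ)
    (X : Finset (Sym2 (ZMod (2 * (ℓ - 1) / 3) ⊕ ZMod (2 * (ℓ - 1) / 3))))
    (hX : (X.card : ℝ) ≤ (ℓ : ℝ) / 30) :
    ∃ (x : ZMod (2 * (ℓ - 1) / 3) ⊕ ZMod (2 * (ℓ - 1) / 3))
      (C : ((sunGraph (2 * (ℓ - 1) / 3)).deleteEdges ↑X).Walk x x),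
      C.IsCycle ∧ ℓ ≤ C.length := by
  have hk : 30 * X.card ≤ ℓ := by
    have h30 : (30 : ℝ) * (X.card : ℝ) ≤ ℓ := by linarith
    exact_mod_cast h30
  have hp3 : 3 ≤ 2 * (ℓ - 1) / 3 := by omega
  have hp4 : 4 * X.card < 2 * (ℓ - 1) / 3 := by omega
  obtain ⟨x, C, hC, hlen⟩ := SunAux.main_cycle X hp3 hp4
  exact ⟨x, C, hC, by omega⟩
end

section
/- Let G be a connected graph and F ⊆ G a frame with ds(F) maximal. Then every F-path in G has length less than ℓ. -/
open SimpleGraph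

/-- A frame of `G`: a subgraph with minimum degree at least `2` in which
every cycle is long, i.e. has length at least `ℓ`. -/
def IsFrame (ℓ : ℕ) {V : Type} {G : SimpleGraph V} (F : G.Subgraph) : Prop :=
  (∀ v ∈ F.verts, 2 ≤ (F.neighborSet v).ncard) ∧
  (∀ (x : V) (C : G.Walk x x), C.IsCycle →
    (∀ e ∈ C.edges, e ∈ F.edgeSet) → ℓ ≤ C.length)

open scoped Classical in
/-- `ds F`: the sum of the degrees of the vertices of degree at least `3`
in `F`. -/
noncomputable def dsF {V : Type} [Fintype V] {G : SimpleGraph V}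
    (F : G.Subgraph) : ℕ :=
  ∑ v ∈ Finset.univ.filter (fun v => 3 ≤ (F.neighborSet v).ncard),
    (F.neighborSet v).ncard

open Walk

section AuxLemmas
variable {V : Type} {G : SimpleGraph V}

lemma path_getVert_injOn {u v : V} {p : G.Walk u v} (hp : p.IsPath) :
    ∀ i ≤ p.length, ∀ j ≤ p.length, p.getVert i = p.getVert j → i = j := by
  induction p with
  | nil => simp
  | @cons a b c h q ih =>
    rw [cons_isPath_iff] at hp
    intro i hi j hj hij
    match i, j with
    | 0, 0 => rfl
    | 0, j+1 =>
      exfalso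
      apply hp.2
      rw [getVert_zero, getVert_cons_succ] at hij
      exact mem_support_iff_exists_getVert.mpr ⟨j, hij.symm, by simpa using hj⟩
    | i+1, 0 =>
      exfalso
      apply hp.2
      rw [getVert_zero, getVert_cons_succ] at hij
      exact mem_support_iff_exists_getVert.mpr ⟨i, hij, by simpa using hi⟩
    | i+1, j+1 =>
      rw [getVert_cons_succ, getVert_cons_succ] at hij
      have := ih hp.1 i (by simpa using hi) j (by simpa using hj) hij
      omega

lemma mem_edges_iff_getVert {u v : V} {p : G.Walk u v} {e : Sym2 V} :
    e ∈ p.edges ↔ ∃ i, s(p.getVert i, p.getVert (i+1)) = e ∧ i < p.length := by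
  rw [← Walk.mem_edges_toSubgraph]
  induction e with
  | _ a b => rw [Subgraph.mem_edgeSet, Walk.toSubgraph_adj_iff]

lemma nbhd_internal {u v : V} {p : G.Walk u v} (hp : p.IsPath) {i : ℕ}
    (h0 : 0 < i) (hl : i < p.length) :
    p.toSubgraph.neighborSet (p.getVert i) = {p.getVert (i-1), p.getVert (i+1)} := by
  ext w
  simp only [Subgraph.mem_neighborSet, Walk.toSubgraph_adj_iff, Set.mem_insert_iff,
    Set.mem_singleton_iff]
  constructor
  · rintro ⟨j, hj, hjl⟩
    rw [Sym2.eq_iff] at hj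
    rcases hj with ⟨h1, h2⟩ | ⟨h1, h2⟩
    · have : j = i := path_getVert_injOn hp j (by omega) i (by omega) h1
      right; rw [← h2, this]
    · have : j + 1 = i := path_getVert_injOn hp (j+1) (by omega) i (by omega) h2
      left; rw [← h1]; congr 1; omega
  · rintro (rfl | rfl)
    · exact ⟨i - 1, by rw [Nat.sub_add_cancel h0, Sym2.eq_swap], by omega⟩
    · exact ⟨i, rfl, hl⟩

lemma nbhd_start {u v : V} {p : G.Walk u v} (hp : p.IsPath) (h0 : 0 < p.length) :
    p.toSubgraph.neighborSet u = {p.getVert 1} := by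
  ext w
  simp only [Subgraph.mem_neighborSet, Walk.toSubgraph_adj_iff, Set.mem_singleton_iff]
  constructor
  · rintro ⟨j, hj, hjl⟩
    rcases Sym2.eq_iff.mp hj with ⟨h1, h2⟩ | ⟨h1, h2⟩
    · have : j = 0 := path_getVert_injOn hp j (by omega) 0 (by omega)
        (h1.trans (getVert_zero p).symm)
      rw [← h2, this]
    · have : j + 1 = 0 := path_getVert_injOn hp (j+1) (by omega) 0 (by omega)
        (h2.trans (getVert_zero p).symm)
      omega
  · rintro rfl
    exact ⟨0, by rw [getVert_zero], h0⟩

lemma nbhd_end {u v : V} {p : G.Walk u v} (hp : p.IsPath) (h0 : 0 < p.length) :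
    p.toSubgraph.neighborSet v = {p.getVert (p.length - 1)} := by
  have := nbhd_start hp.reverse (by rwa [length_reverse])
  rw [toSubgraph_reverse, getVert_reverse] at this
  exact this

lemma cycle_two_neighbors {z : V} {C : G.Walk z z} (hC : C.IsCycle) {v : V}
    (hv : v ∈ C.support) :
    ∃ a b, a ≠ b ∧ C.toSubgraph.Adj v a ∧ C.toSubgraph.Adj v b := by
  classical
  have hC' := hC.rotate hv
  have hts : (C.rotate v hv).toSubgraph = C.toSubgraph := C.toSubgraph_rotate hv
  set C' := C.rotate v hv with hC'def
  have h3 : 3 ≤ C'.length := hC'.three_le_length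
  refine ⟨C'.getVert 1, C'.getVert (C'.length - 1), ?_, ?_, ?_⟩
  · -- distinctness via the tail path
    have hnil : ¬ C'.Nil := hC'.not_nil
    have hcons := C'.cons_tail_eq hnil
    have hcyc2 : (Walk.cons (C'.adj_snd hnil) C'.tail).IsCycle := by
      rw [hcons]; exact hC'
    rw [cons_isCycle_iff] at hcyc2
    have hq : C'.tail.IsPath := hcyc2.1
    have hlen : C'.tail.length + 1 = C'.length := length_tail_add_one hnil
    intro heq
    have e1 : C'.tail.getVert 0 = C'.getVert 1 := getVert_tail C'
    have e2 : C'.tail.getVert (C'.tail.length - 1) = C'.getVert (C'.length - 1) := by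
      rw [getVert_tail C']
      congr 1
      omega
    have heq' : C'.tail.getVert 0 = C'.tail.getVert (C'.tail.length - 1) := by
      rw [e1, e2, heq]
    have := path_getVert_injOn hq 0 (Nat.zero_le _) (C'.tail.length - 1) (by omega) heq'
    omega
  · have := C'.toSubgraph_adj_getVert (i := 0) (by omega)
    rw [getVert_zero] at this
    rwa [← hts]
  · have := C'.toSubgraph_adj_getVert (i := C'.length - 1) (by omega)
    rw [show C'.length - 1 + 1 = C'.length by omega, getVert_length] at this
    rw [← hts]
    exact this.symm

end AuxLemmas

/-- if `G` is connected and `F` is a frame of `G`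
maximizing `ds(F)`, then every `F`-path in `G` (a path with two distinct
endvertices in `F`, internally disjoint from `F` and using no edge of `F`)
has length less than `ℓ`. -/
theorem frame_paths_short {V : Type} [Fintype V] (G : SimpleGraph V)
    (ℓ : ℕ) (hℓ : 3 ≤ ℓ) (hG : G.Connected)
    (F : G.Subgraph) (hF : IsFrame ℓ F)
    (hmax : ∀ F' : G.Subgraph, IsFrame ℓ F' → dsF F' ≤ dsF F) :
    ∀ {x y : V} (W : G.Walk x y), x ≠ y → W.IsPath →
      x ∈ F.verts → y ∈ F.verts →
      (∀ z ∈ W.support, z ≠ x → z ≠ y → z ∉ F.verts) →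
      (∀ e ∈ W.edges, e ∉ F.edgeSet) →
      W.length < ℓ := by
  intro x y W hxy hp hxF hyF hint hed
  by_contra hlt
  rw [not_lt] at hlt
  classical
  set H := W.toSubgraph with hH
  set F' := F ⊔ H with hF'def
  have hlen : 3 ≤ W.length := le_trans hℓ hlt
  have hintF : ∀ i, 0 < i → i < W.length → W.getVert i ∉ F.verts := by
    intro i h0 hl
    apply hint (W.getVert i) (mem_support_iff_exists_getVert.mpr ⟨i, rfl, by omega⟩)
    · intro h
      have := path_getVert_injOn hp i (by omega) 0 (by omega)
        (h.trans (getVert_zero W).symm)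
      omega
    · intro h
      have := path_getVert_injOn hp i (by omega) W.length (by omega)
        (h.trans (getVert_length W).symm)
      omega
  have hframe' : IsFrame ℓ F' := by
    constructor
    · intro v hv
      by_cases hvF : v ∈ F.verts
      · refine le_trans (hF.1 v hvF) (Set.ncard_le_ncard ?_ (Set.toFinite _))
        rw [hF'def, Subgraph.neighborSet_sup]
        exact Set.subset_union_left
      · have hvW : v ∈ W.support := by
          rw [hF'def, Subgraph.verts_sup] at hv
          rcases hv with h | h
          · exact absurd h hvF
          · exact (mem_verts_toSubgraph W).mp h
        obtain ⟨n, hn, hnl⟩ := mem_support_iff_exists_getVert.mp hvW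
        subst hn
        have h0 : 0 < n := by
          rcases Nat.eq_zero_or_pos n with rfl | h
          · rw [getVert_zero] at hvF; exact absurd hxF hvF
          · exact h
        have hl : n < W.length := by
          rcases eq_or_lt_of_le hnl with rfl | h
          · rw [getVert_length] at hvF; exact absurd hyF hvF
          · exact h
        have hne : W.getVert (n-1) ≠ W.getVert (n+1) := by
          intro h
          have := path_getVert_injOn hp (n-1) (by omega) (n+1) (by omega) h
          omega
        calc 2 = ({W.getVert (n-1), W.getVert (n+1)} : Set V).ncard :=
              (Set.ncard_pair hne).symm
          _ = (H.neighborSet (W.getVert n)).ncard := by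
              rw [hH, nbhd_internal hp h0 hl]
          _ ≤ (F'.neighborSet (W.getVert n)).ncard := by
              refine Set.ncard_le_ncard ?_ (Set.toFinite _)
              rw [hF'def, Subgraph.neighborSet_sup]
              exact Set.subset_union_right
    · intro z C hC hCe
      by_cases hall : ∀ e ∈ C.edges, e ∈ F.edgeSet
      · exact hF.2 z C hC hall
      push_neg at hall
      obtain ⟨e0, he0C, he0F⟩ := hall
      have he0W : e0 ∈ W.edges := by
        have h := hCe e0 he0C
        rw [hF'def, Subgraph.edgeSet_sup] at h
        rcases h with h | h
        · exact absurd h he0F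
        · exact (Walk.mem_edges_toSubgraph W).mp h
      have step : ∀ k, 0 < k → k < W.length → W.getVert k ∈ C.support →
          s(W.getVert (k-1), W.getVert k) ∈ C.edges ∧
          s(W.getVert k, W.getVert (k+1)) ∈ C.edges := by
        intro k h0 hl hks
        obtain ⟨a, b, hab, ha, hb⟩ := cycle_two_neighbors hC hks
        have edgeC : ∀ w', C.toSubgraph.Adj (W.getVert k) w' →
            s(W.getVert k, w') ∈ C.edges := fun w' hw' =>
          (Walk.mem_edges_toSubgraph C).mp (Subgraph.mem_edgeSet.mpr hw')
        have key : ∀ w', C.toSubgraph.Adj (W.getVert k) w' →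
            w' = W.getVert (k-1) ∨ w' = W.getVert (k+1) := by
          intro w' hw'
          have h1 : s(W.getVert k, w') ∈ F'.edgeSet :=
            hCe _ (edgeC w' hw')
          rw [hF'def, Subgraph.edgeSet_sup] at h1
          rcases h1 with h1 | h1
          · exact absurd (Subgraph.mem_edgeSet.mp h1).fst_mem (hintF k h0 hl)
          · have h2 : H.Adj (W.getVert k) w' := Subgraph.mem_edgeSet.mp h1
            have h3 : w' ∈ H.neighborSet (W.getVert k) := h2
            rw [hH, nbhd_internal hp h0 hl] at h3
            simpa using h3
        rcases key a ha with h1 | h1 <;> rcases key b hb with h2 | h2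
        · exact absurd (h1.trans h2.symm) hab
        · exact ⟨by rw [Sym2.eq_swap, ← h1]; exact edgeC a ha,
            by rw [← h2]; exact edgeC b hb⟩
        · exact ⟨by rw [Sym2.eq_swap, ← h2]; exact edgeC b hb,
            by rw [← h1]; exact edgeC a ha⟩
        · exact absurd (h1.trans h2.symm) hab
      obtain ⟨i0, hi0e, hi0l⟩ := mem_edges_iff_getVert.mp he0W
      have hP0 : s(W.getVert i0, W.getVert (i0+1)) ∈ C.edges := hi0e ▸ he0C
      have up : ∀ d i, i < W.length →
          s(W.getVert i, W.getVert (i+1)) ∈ C.edges → i + d < W.length →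
          s(W.getVert (i+d), W.getVert (i+d+1)) ∈ C.edges := by
        intro d
        induction d with
        | zero => intro i _ h _; simpa using h
        | succ d ih =>
          intro i hi hPi hd
          have hPd : s(W.getVert (i+d), W.getVert (i+d+1)) ∈ C.edges :=
            ih i hi hPi (by omega)
          have hsup : W.getVert (i+d+1) ∈ C.support :=
            Walk.snd_mem_support_of_mem_edges C hPd
          have h := (step (i+d+1) (by omega) (by omega) hsup).2
          have e1 : i + (d+1) = i + d + 1 := by omega
          rw [e1]
          exact h
      have down : ∀ d i, i < W.length →
          s(W.getVert i, W.getVert (i+1)) ∈ C.edges →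
          s(W.getVert (i-d), W.getVert (i-d+1)) ∈ C.edges := by
        intro d
        induction d with
        | zero => intro i _ h; simpa using h
        | succ d ih =>
          intro i hi hPi
          have hPd : s(W.getVert (i-d), W.getVert (i-d+1)) ∈ C.edges :=
            ih i hi hPi
          by_cases h0 : i - d = 0
          · rw [show i - (d+1) = 0 by omega]
            rw [h0] at hPd
            exact hPd
          · have hsup : W.getVert (i-d) ∈ C.support :=
              Walk.fst_mem_support_of_mem_edges C hPd
            have h := (step (i-d) (by omega) (by omega) hsup).1
            rw [show i - (d+1) = i - d - 1 by omega,
              show i - d - 1 + 1 = i - d by omega]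
            exact h
      have hsub : ∀ e' ∈ W.edges, e' ∈ C.edges := by
        intro e' he'
        obtain ⟨j, hj, hjl⟩ := mem_edges_iff_getVert.mp he'
        rw [← hj]
        by_cases hji : i0 ≤ j
        · have h := up (j - i0) i0 hi0l hP0 (by omega)
          rwa [show i0 + (j - i0) = j by omega] at h
        · have h := down (i0 - j) i0 hi0l hP0
          rwa [show i0 - (i0 - j) = j by omega] at h
      calc ℓ ≤ W.length := hlt
        _ = W.edges.length := (W.length_edges).symm
        _ ≤ C.edges.length :=
            (List.subperm_of_subset hp.isTrail.edges_nodup hsub).length_le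
        _ = C.length := C.length_edges
  have hmono : ∀ v, (F.neighborSet v).ncard ≤ (F'.neighborSet v).ncard := by
    intro v
    refine Set.ncard_le_ncard ?_ (Set.toFinite _)
    rw [hF'def, Subgraph.neighborSet_sup]
    exact Set.subset_union_left
  have hxcard : (F'.neighborSet x).ncard = (F.neighborSet x).ncard + 1 := by
    have hnm : W.getVert 1 ∉ F.neighborSet x := by
      intro h
      exact hintF 1 (by omega) (by omega) (Subgraph.Adj.snd_mem h)
    rw [hF'def, Subgraph.neighborSet_sup, hH, nbhd_start hp (by omega),
      Set.union_singleton, Set.ncard_insert_of_notMem hnm (Set.toFinite _)]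
  have hdlt : dsF F < dsF F' := by
    simp only [dsF, Finset.sum_filter]
    apply Finset.sum_lt_sum
    · intro v _
      by_cases h3 : 3 ≤ (F.neighborSet v).ncard
      · rw [if_pos h3, if_pos (le_trans h3 (hmono v))]
        exact hmono v
      · rw [if_neg h3]
        exact Nat.zero_le _
    · refine ⟨x, Finset.mem_univ x, ?_⟩
      have h2 : 2 ≤ (F.neighborSet x).ncard := hF.1 x hxF
      rw [if_pos (show 3 ≤ (F'.neighborSet x).ncard by omega)]
      by_cases h3 : 3 ≤ (F.neighborSet x).ncard
      · rw [if_pos h3]; omega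
      · rw [if_neg h3]; omega
  exact absurd (hmax F' hframe') (not_le.mpr hdlt)
end
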